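/- arXiv:2601.19999 — 2 statements merged into one kernel-verified Lean document; each statement's English description precedes it below -/
import Mathlib

section
/- Suppose u is an ultrafilter on ℕ possessing a base ⟨B_α : α < ω₁⟩ that is strictly ⊆*-decreasing, i.e., B_β ⊆* B_α and B_α\B_β is infinite whenever α < β < ω₁, and every member of u almost contains some B_α (B_α ⊆* A for some α whenever A ∈ u). Then there exists a bowtie of involutions ⟨f_α : α < ω₁⟩ whose domains satisfy D_α =* ℕ\B_α for every α < ω₁. Consequently, the existence of a P-point of character ℵ₁ implies the existence of a nontrivial automorphism of P(ω)/Fin. -/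
open Set

/-- The first uncountable ordinal `ω₁`. -/
noncomputable def omega1 : Ordinal := (Cardinal.aleph 1).ord

/-- `A =* B` : the symmetric difference `(A \ B) ∪ (B \ A)` is finite. -/
def EqStar (A B : Set ℕ) : Prop := ((A \ B) ∪ (B \ A)).Finite

/-- `A ⊆* B` : `A \ B` is finite. -/
def SubStar (A B : Set ℕ) : Prop := (A \ B).Finite

/-- A bowtie of functions: a sequence `⟨f_α : α < ω₁⟩` where each `f_α` is a
fixed-point-free permutation of a set `D_α ⊆ ℕ`, satisfying conditions
(i), (ii), (iii) of the definition.  (The functions are represented as total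
functions on `ℕ`; only their behavior on `D_α` matters.) -/
structure BowtieFn where
  /-- the domains `D_α` -/
  D : Ordinal → Set ℕ
  /-- the functions `f_α` (total functions; only values on `D α` matter) -/
  f : Ordinal → ℕ → ℕ
  /-- each `f_α` is a permutation of `D_α` -/
  bijOn : ∀ α < omega1, Set.BijOn (f α) (D α) (D α)
  /-- each `f_α` is fixed-point-free on `D_α` -/
  fixedPointFree : ∀ α < omega1, ∀ x ∈ D α, f α x ≠ x
  /-- (i) `D_α ⊆* D_β` for `α < β < ω₁` -/
  sub : ∀ α β, α < β → β < omega1 → SubStar (D α) (D β)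
  /-- (i) `D_β \ D_α` is infinite for `α < β < ω₁` -/
  diff_infinite : ∀ α β, α < β → β < omega1 → (D β \ D α).Infinite
  /-- (ii) `f_α =* f_β ↾ D_α` for `α ≤ β < ω₁` -/
  coherent : ∀ α β, α ≤ β → β < omega1 → {x ∈ D α | f α x ≠ f β x}.Finite
  /-- (iii) every `A ⊆ ℕ` has a witness `δ_A < ω₁` -/
  guess : ∀ A : Set ℕ, ∃ δ, δ < omega1 ∧ ∀ α, δ ≤ α → α < omega1 →
      EqStar (f α '' ((D α \ D δ) ∩ A)) ((D α \ D δ) ∩ A) ∧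
      EqStar (f α '' ((D α \ D δ) \ A)) ((D α \ D δ) \ A)

/-- A bowtie of involutions: a bowtie of functions in which every `f_α` is an
involution of its domain `D_α`. -/
structure BowtieInv extends BowtieFn where
  /-- each `f_α` is an involution on `D_α` -/
  invol : ∀ α < omega1, ∀ x ∈ D α, f α (f α x) = x

/-- An automorphism of the Boolean algebra `P(ω)/Fin`, represented by a lifting
`Φ : Set ℕ → Set ℕ` acting on representatives: `Φ` is well defined, injective
and surjective modulo finite sets, and preserves the Boolean operations modulo
finite sets. -/
structure PωFinAuto where
  /-- the action on representatives -/
  Φ : Set ℕ → Set ℕ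
  /-- well-definedness on `=*`-classes -/
  congr : ∀ A B : Set ℕ, EqStar A B → EqStar (Φ A) (Φ B)
  /-- injectivity on `=*`-classes -/
  inj : ∀ A B : Set ℕ, EqStar (Φ A) (Φ B) → EqStar A B
  /-- surjectivity on `=*`-classes -/
  surj : ∀ B : Set ℕ, ∃ A : Set ℕ, EqStar (Φ A) B
  /-- preservation of unions -/
  map_union : ∀ A B : Set ℕ, EqStar (Φ (A ∪ B)) (Φ A ∪ Φ B)
  /-- preservation of complements -/
  map_compl : ∀ A : Set ℕ, EqStar (Φ Aᶜ) (Φ A)ᶜ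

/-- A map on representatives induces a *trivial* automorphism of `P(ω)/Fin` if
there is an almost permutation `h` of `ℕ` (an injection on a cofinite set `dom`
whose image is cofinite) with `Φ A =* h[A ∩ dom]` for all `A`. -/
def IsTrivial (Φ : Set ℕ → Set ℕ) : Prop :=
  ∃ (h : ℕ → ℕ) (dom : Set ℕ), (domᶜ : Set ℕ).Finite ∧
    ((h '' dom)ᶜ : Set ℕ).Finite ∧ Set.InjOn h dom ∧
    ∀ A : Set ℕ, EqStar (Φ A) (h '' (A ∩ dom))

theorem eqStar_iff {A B : Set ℕ} : EqStar A B ↔ SubStar A B ∧ SubStar B A := by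
  constructor
  · intro h
    exact ⟨h.subset subset_union_left, h.subset subset_union_right⟩
  · rintro ⟨h1, h2⟩; exact h1.union h2

theorem eqStar_of_sub {A B : Set ℕ} (h1 : SubStar A B) (h2 : SubStar B A) : EqStar A B :=
  h1.union h2

theorem EqStar.sub {A B : Set ℕ} (h : EqStar A B) : SubStar A B := (eqStar_iff.1 h).1

theorem eqStar_refl (A : Set ℕ) : EqStar A A := by
  simp [EqStar]

theorem EqStar.symm {A B : Set ℕ} (h : EqStar A B) : EqStar B A := by
  rw [EqStar, union_comm] at h; exact h

theorem subStar_of_subset {A B : Set ℕ} (h : A ⊆ B) : SubStar A B := by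
  simp [SubStar, diff_eq_empty.2 h]

theorem SubStar.trans {A B C : Set ℕ} (h1 : SubStar A B) (h2 : SubStar B C) : SubStar A C := by
  refine ((h1.union h2).subset ?_)
  intro x hx
  rcases Classical.em (x ∈ B) with hb | hb
  · exact Or.inr ⟨hb, hx.2⟩
  · exact Or.inl ⟨hx.1, hb⟩

theorem SubStar.mono_left {A A' B : Set ℕ} (h : A' ⊆ A) (h1 : SubStar A B) : SubStar A' B :=
  (subStar_of_subset h).trans h1

theorem EqStar.trans {A B C : Set ℕ} (h1 : EqStar A B) (h2 : EqStar B C) : EqStar A C :=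
  eqStar_of_sub (h1.sub.trans h2.sub) (h2.symm.sub.trans h1.symm.sub)

theorem eqStar_of_finite {A B : Set ℕ} (hA : A.Finite) (hB : B.Finite) : EqStar A B :=
  eqStar_of_sub (hA.subset diff_subset) (hB.subset diff_subset)

theorem EqStar.finite_of {A B : Set ℕ} (h : EqStar A B) (hA : A.Finite) : B.Finite := by
  have : B ⊆ (B \ A) ∪ A := by intro x hx; by_cases hxa : x ∈ A; exacts [Or.inr hxa, Or.inl ⟨hx, hxa⟩]
  exact ((h.subset subset_union_right).union hA).subset this

theorem EqStar.infinite_of {A B : Set ℕ} (h : EqStar A B) (hA : A.Infinite) : B.Infinite := by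
  intro hB; exact hA (h.symm.finite_of hB)

theorem SubStar.infinite_of {A B : Set ℕ} (h : SubStar A B) (hA : A.Infinite) : B.Infinite := by
  intro hB
  exact hA ((h.union hB).subset (by intro x hx; by_cases hb : x ∈ B; exacts [Or.inr hb, Or.inl ⟨hx, hb⟩]))

theorem EqStar.union {A B A' B' : Set ℕ} (h1 : EqStar A A') (h2 : EqStar B B') :
    EqStar (A ∪ B) (A' ∪ B') := by
  refine (Set.Finite.union h1 h2).subset ?_
  intro x hx
  simp only [mem_union, mem_diff, mem_union] at hx ⊢
  tauto

theorem EqStar.inter {A B A' B' : Set ℕ} (h1 : EqStar A A') (h2 : EqStar B B') :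
    EqStar (A ∩ B) (A' ∩ B') := by
  refine (Set.Finite.union h1 h2).subset ?_
  intro x hx
  simp only [mem_union, mem_diff, mem_inter_iff] at hx ⊢
  tauto

theorem EqStar.compl {A A' : Set ℕ} (h1 : EqStar A A') : EqStar Aᶜ A'ᶜ := by
  refine Set.Finite.subset h1 ?_
  intro x hx
  simp only [mem_union, mem_diff, mem_compl_iff] at hx ⊢
  tauto

theorem EqStar.diff {A B A' B' : Set ℕ} (h1 : EqStar A A') (h2 : EqStar B B') :
    EqStar (A \ B) (A' \ B') := by
  have : ∀ X Y : Set ℕ, X \ Y = X ∩ Yᶜ := fun X Y => rfl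
  rw [this, this]; exact h1.inter h2.compl

theorem EqStar.image {A B : Set ℕ} (f : ℕ → ℕ) (h : EqStar A B) :
    EqStar (f '' A) (f '' B) := by
  refine ((h.subset subset_union_left).image f |>.union ((h.subset subset_union_right).image f)).subset ?_
  intro z hz
  simp only [mem_union, mem_diff, mem_image] at hz ⊢
  rcases hz with ⟨⟨a, ha, rfl⟩, hz'⟩ | ⟨⟨a, ha, rfl⟩, hz'⟩
  · exact Or.inl ⟨a, ⟨ha, fun c => hz' ⟨a, c, rfl⟩⟩, rfl⟩
  · exact Or.inr ⟨a, ⟨ha, fun c => hz' ⟨a, c, rfl⟩⟩, rfl⟩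

theorem image_diff_of_injOn {f : ℕ → ℕ} {S T U : Set ℕ} (hinj : Set.InjOn f U)
    (hS : S ⊆ U) (hT : T ⊆ U) : f '' (S \ T) = f '' S \ f '' T := by
  ext z
  constructor
  · rintro ⟨x, ⟨hxS, hxT⟩, rfl⟩
    refine ⟨⟨x, hxS, rfl⟩, ?_⟩
    rintro ⟨y, hyT, hy⟩
    exact hxT (hinj (hT hyT) (hS hxS) hy ▸ hyT)
  · rintro ⟨⟨x, hxS, rfl⟩, hz⟩
    exact ⟨x, ⟨hxS, fun c => hz ⟨x, c, rfl⟩⟩, rfl⟩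

theorem finite_of_image_finite {f : ℕ → ℕ} {S : Set ℕ} (hinj : Set.InjOn f S)
    (h : (f '' S).Finite) : S.Finite :=
  Set.Finite.of_finite_image h hinj

theorem EqStar.of_image_injOn {f : ℕ → ℕ} {A B U : Set ℕ} (hinj : Set.InjOn f U)
    (hA : A ⊆ U) (hB : B ⊆ U) (h : EqStar (f '' A) (f '' B)) : EqStar A B := by
  refine eqStar_of_sub ?_ ?_
  · refine finite_of_image_finite (hinj.mono (diff_subset.trans hA)) ?_
    rw [image_diff_of_injOn hinj hA hB]
    exact h.subset subset_union_left
  · refine finite_of_image_finite (hinj.mono (diff_subset.trans hB)) ?_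
    rw [image_diff_of_injOn hinj hB hA]
    exact h.subset subset_union_right

/-- preimage-in-S of a finite set under a map injective on S is finite -/
theorem finite_preimage_inj {f : ℕ → ℕ} {S F : Set ℕ} (hinj : Set.InjOn f S)
    (hF : F.Finite) : {x ∈ S | f x ∈ F}.Finite := by
  refine finite_of_image_finite (hinj.mono (sep_subset _ _)) (hF.subset ?_)
  rintro z ⟨x, hx, rfl⟩; exact hx.2

theorem bijOn_of_invol {f : ℕ → ℕ} {S : Set ℕ} (hmaps : ∀ x ∈ S, f x ∈ S)
    (hinv : ∀ x ∈ S, f (f x) = x) : Set.BijOn f S S := by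
  refine ⟨hmaps, ?_, ?_⟩
  · intro a ha b hb hab
    have := hinv a ha
    rw [hab, hinv b hb] at this
    exact this.symm
  · intro x hx
    exact ⟨f x, hmaps x hx, hinv x hx⟩



-- involution existence
def jswap (k : ℕ) : ℕ := if Even k then k + 1 else k - 1

theorem jswap_ne (k : ℕ) : jswap k ≠ k := by
  unfold jswap
  split
  · omega
  · rename_i h
    have : k ≠ 0 := by rintro rfl; exact h (by simp)
    omega

theorem jswap_jswap (k : ℕ) : jswap (jswap k) = k := by
  unfold jswap
  rcases Nat.even_or_odd k with h | h
  · rw [if_pos h, if_neg (by simp [Nat.even_add_one, h]), Nat.add_sub_cancel]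
  · have h' : ¬ Even k := Nat.not_even_iff_odd.2 h
    rw [if_neg h']
    have hk : k ≠ 0 := by rintro rfl; exact h' (by simp)
    have h2 : Even (k - 1) := by
      rcases h with ⟨m, rfl⟩; exact ⟨m, by omega⟩
    rw [if_pos h2]
    omega

theorem jswap_lt {k n : ℕ} (hk : k < n) (hn : Even n) : jswap k < n := by
  unfold jswap
  split
  · rename_i h
    rcases Nat.lt_or_ge (k+1) n with h' | h'
    · exact h'
    · exfalso
      have : k + 1 = n := by omega
      rw [← this] at hn
      rcases h with ⟨m, rfl⟩; rcases hn with ⟨l, hl⟩; omega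
  · omega

open Classical in
/-- Every subset of ℕ which is infinite or of even cardinality carries a
fixed-point-free involution (acting as identity outside). -/
theorem exists_fpf_invol (S : Set ℕ) (h : S.Finite → Even S.ncard) :
    ∃ f : ℕ → ℕ, (∀ x ∈ S, f x ∈ S) ∧ (∀ x ∈ S, f (f x) = x) ∧ (∀ x ∈ S, f x ≠ x) ∧
      (∀ x, x ∉ S → f x = x) := by
  classical
  set p : ℕ → Prop := fun x => x ∈ S with hp
  have hsetof : setOf p = S := rfl
  set g : ℕ → ℕ := fun x => if x ∈ S then Nat.nth p (jswap (Nat.count p x)) else x with hgdef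
  have hg : ∀ x, g x = if x ∈ S then Nat.nth p (jswap (Nat.count p x)) else x := fun _ => rfl
  refine ⟨g, ?_⟩
  have hval : ∀ x ∈ S, g x = Nat.nth p (jswap (Nat.count p x)) := fun x hx => by
    rw [hg x]; exact if_pos hx
  have hout : ∀ x, x ∉ S → g x = x := fun x hx => by rw [hg x]; exact if_neg hx
  rcases S.finite_or_infinite with hfin | hinf
  · have hfin' : (setOf p).Finite := by rwa [hsetof]
    have hcard : S.ncard = hfin'.toFinset.card := by
      rw [Set.ncard_eq_toFinset_card S hfin]
      exact rfl
    have heven : Even hfin'.toFinset.card := by rw [← hcard]; exact h hfin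
    have hjlt : ∀ x ∈ S, jswap (Nat.count p x) < hfin'.toFinset.card := fun x hx =>
      jswap_lt (Nat.count_lt_card hfin' (by exact hx)) heven
    have hmem : ∀ x ∈ S, Nat.nth p (jswap (Nat.count p x)) ∈ S := fun x hx =>
      Nat.nth_mem_of_lt_card hfin' (hjlt x hx)
    refine ⟨fun x hx => by rw [hval x hx]; exact hmem x hx, ?_, ?_, hout⟩
    · intro x hx
      rw [hval x hx, hval _ (hmem x hx), Nat.count_nth_of_lt_card_finite hfin' (hjlt x hx),
        jswap_jswap, Nat.nth_count (by exact hx)]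
    · intro x hx
      rw [hval x hx]
      intro hcon
      have := Nat.count_nth_of_lt_card_finite hfin' (hjlt x hx)
      rw [hcon] at this
      exact jswap_ne (Nat.count p x) this.symm
  · have hinf' : (setOf p).Infinite := by rwa [hsetof]
    have hmem : ∀ x ∈ S, Nat.nth p (jswap (Nat.count p x)) ∈ S := fun x _ =>
      Nat.nth_mem_of_infinite hinf' _
    refine ⟨fun x hx => by rw [hval x hx]; exact hmem x hx, ?_, ?_, hout⟩
    · intro x hx
      rw [hval x hx, hval _ (hmem x hx), Nat.count_nth_of_infinite hinf', jswap_jswap,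
        Nat.nth_count (by exact hx)]
    · intro x hx
      rw [hval x hx]
      intro hcon
      have := Nat.count_nth_of_infinite hinf' (jswap (Nat.count p x))
      rw [hcon] at this
      exact jswap_ne (Nat.count p x) this.symm

/-- Every subset `S` of ℕ has a subset `S'` with `S \ S'` finite (in fact at most a point)
carrying a fixed-point-free involution. -/
theorem exists_fpf_invol_sub (S : Set ℕ) :
    ∃ S' : Set ℕ, S' ⊆ S ∧ (S \ S').Finite ∧
      ∃ f : ℕ → ℕ, (∀ x ∈ S', f x ∈ S') ∧ (∀ x ∈ S', f (f x) = x) ∧ (∀ x ∈ S', f x ≠ x) ∧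
        (∀ x, x ∉ S' → f x = x) := by
  classical
  by_cases h : S.Finite → Even S.ncard
  · exact ⟨S, le_refl _, by simp, exists_fpf_invol S h⟩
  · push_neg at h
    obtain ⟨hfin, hodd⟩ := h
    have hne : S.Nonempty := by
      rcases S.eq_empty_or_nonempty with rfl | hne
      · exact absurd (by rw [Set.ncard_empty]; exact Even.zero) hodd
      · exact hne
    obtain ⟨a, ha⟩ := hne
    refine ⟨S \ {a}, Set.diff_subset, ?_, ?_⟩
    · exact (Set.finite_singleton a).subset (by intro x hx; simp at hx ⊢; tauto)
    · refine exists_fpf_invol _ (fun hf => ?_)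
      have : (S \ {a}).ncard = S.ncard - 1 := by
        rw [Set.ncard_diff_singleton_of_mem ha]
      rw [this]
      rcases Nat.even_or_odd S.ncard with he | ho
      · exact absurd he hodd
      · rcases ho with ⟨m, hm⟩
        exact ⟨m, by omega⟩

/-- Amalgamation: a countable coherent chain of fixed-point-free involutions can be
amalgamated into a single fixed-point-free involution on (almost all of) `D`. -/
theorem amalg (D : Set ℕ) (Dn : ℕ → Set ℕ) (fn : ℕ → ℕ → ℕ)
    (hsub : ∀ m n, m ≤ n → SubStar (Dn m) (Dn n))
    (hcoh : ∀ m n, m ≤ n → {x ∈ Dn m | fn m x ≠ fn n x}.Finite)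
    (hD : ∀ n, SubStar (Dn n) D)
    (hmaps : ∀ n, ∀ x ∈ Dn n, fn n x ∈ Dn n)
    (hinvol : ∀ n, ∀ x ∈ Dn n, fn n (fn n x) = x)
    (hfpf : ∀ n, ∀ x ∈ Dn n, fn n x ≠ x) :
    ∃ (D' : Set ℕ) (f : ℕ → ℕ), EqStar D' D ∧ (∀ x ∈ D', f x ∈ D') ∧
      (∀ x ∈ D', f (f x) = x) ∧ (∀ x ∈ D', f x ≠ x) ∧
      ∀ n, {x ∈ Dn n | fn n x ≠ f x}.Finite := by
  classical
  obtain ⟨E, hE0, hEs⟩ : ∃ E : ℕ → Set ℕ,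
      E 0 = {x ∈ D ∩ Dn 0 | fn 0 x ∈ D ∩ Dn 0} ∧
      ∀ m, E (m+1) = E m ∪
        {x ∈ D ∩ Dn (m+1) | x ∉ E m ∧ fn (m+1) x ∈ D ∩ Dn (m+1) ∧ fn (m+1) x ∉ E m} :=
    ⟨fun n => Nat.rec {x ∈ D ∩ Dn 0 | fn 0 x ∈ D ∩ Dn 0}
      (fun m Em => Em ∪
        {x ∈ D ∩ Dn (m+1) | x ∉ Em ∧ fn (m+1) x ∈ D ∩ Dn (m+1) ∧ fn (m+1) x ∉ Em}) n,
      rfl, fun m => rfl⟩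
  have hmono : ∀ m n, m ≤ n → E m ⊆ E n := by
    intro m n hmn
    induction n with
    | zero => rw [Nat.le_zero] at hmn; subst hmn; exact le_refl _
    | succ k ih =>
      rcases Nat.lt_or_ge m (k+1) with h | h
      · exact (ih (by omega)).trans (by rw [hEs k]; exact Set.subset_union_left)
      · have : m = k + 1 := by omega
        subst this; exact le_refl _
  have hED : ∀ n, E n ⊆ D := by
    intro n
    induction n with
    | zero => rw [hE0]; intro x hx; exact hx.1.1
    | succ k ih =>
      rw [hEs k]; rintro x (hx | hx)
      · exact ih hx
      · exact hx.1.1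
  -- `flev` : the amalgamated function on `⋃ n, E n`
  set flev : ℕ → ℕ := fun x => if h : ∃ n, x ∈ E n then fn (Nat.find h) x else x with hflevdef
  have hflev_of : ∀ n x, x ∈ E n → (∀ m, m < n → x ∉ E m) → flev x = fn n x := by
    intro n x hx hmin
    have h : ∃ k, x ∈ E k := ⟨n, hx⟩
    have h1 : Nat.find h ≤ n := Nat.find_le hx
    have h2 : ¬ Nat.find h < n := fun hc => hmin _ hc (Nat.find_spec h)
    have : Nat.find h = n := by omega
    show (if h : ∃ n, x ∈ E n then fn (Nat.find h) x else x) = fn n x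
    rw [dif_pos h, this]
  -- closure/involution property of `flev` on each `E n`
  have hclos : ∀ n, ∀ x, x ∈ E n → flev x ∈ E n ∧ flev (flev x) = x ∧ flev x ≠ x := by
    intro n
    induction n with
    | zero =>
      intro x hx
      have hx' := hx; rw [hE0] at hx'
      obtain ⟨hxD, hyD⟩ := hx'
      have hfl : flev x = fn 0 x := hflev_of 0 x hx (fun m hm => absurd hm (Nat.not_lt_zero m))
      have hyE : fn 0 x ∈ E 0 := by
        rw [hE0]
        exact ⟨hyD, by rw [hinvol 0 x hxD.2]; exact hxD⟩
      have hfly : flev (fn 0 x) = fn 0 (fn 0 x) :=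
        hflev_of 0 _ hyE (fun m hm => absurd hm (Nat.not_lt_zero m))
      refine ⟨by rw [hfl]; exact hyE, ?_, ?_⟩
      · rw [hfl, hfly, hinvol 0 x hxD.2]
      · rw [hfl]; exact hfpf 0 x hxD.2
    | succ k ih =>
      intro x hx
      have hx' := hx; rw [hEs k] at hx'
      rcases hx' with hxk | hxN
      · obtain ⟨h1, h2, h3⟩ := ih x hxk
        exact ⟨hmono k (k+1) (by omega) h1, h2, h3⟩
      · obtain ⟨hxD, hxE, hyD, hyE⟩ := hxN
        have hxmin : ∀ m, m < k + 1 → x ∉ E m := fun m hm c =>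
          hxE (hmono m k (by omega) c)
        have hfl : flev x = fn (k+1) x := hflev_of (k+1) x hx hxmin
        have hback : fn (k+1) (fn (k+1) x) = x := hinvol (k+1) x hxD.2
        have hyN : fn (k+1) x ∈ E (k+1) := by
          rw [hEs k]
          exact Or.inr ⟨hyD, hyE, by rw [hback]; exact hxD, by rw [hback]; exact hxE⟩
        have hymin : ∀ m, m < k + 1 → fn (k+1) x ∉ E m := fun m hm c =>
          hyE (hmono m k (by omega) c)
        have hfly : flev (fn (k+1) x) = fn (k+1) (fn (k+1) x) := hflev_of (k+1) _ hyN hymin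
        refine ⟨by rw [hfl]; exact hyN, ?_, ?_⟩
        · rw [hfl, hfly, hback]
        · rw [hfl]; exact hfpf (k+1) x hxD.2
  -- `E n \ Dn n` is finite
  have hEDn : ∀ n, (E n \ Dn n).Finite := by
    intro n
    induction n with
    | zero =>
      refine Set.Finite.subset (Set.finite_empty) ?_
      rw [hE0]; rintro x ⟨hx, hx'⟩; exact absurd hx.1.2 hx'
    | succ k ih =>
      have : E (k+1) \ Dn (k+1) ⊆ (E k \ Dn k) ∪ (Dn k \ Dn (k+1)) := by
        rw [hEs k]
        rintro x ⟨(hx | hx), hx'⟩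
        · by_cases hk : x ∈ Dn k
          · exact Or.inr ⟨hk, hx'⟩
          · exact Or.inl ⟨hx, hk⟩
        · exact absurd hx.1.2 hx'
      exact (ih.union (hsub k (k+1) (by omega))).subset this
  -- almost-coherence of `flev` with `fn k` on `E n`, `n ≤ k`
  have hbad : ∀ n k, n ≤ k → {x ∈ E n | flev x ≠ fn k x}.Finite := by
    intro n
    induction n with
    | zero =>
      intro k _
      refine (hcoh 0 k (by omega)).subset ?_
      rintro x ⟨hx, hne⟩
      have hx' := hx; rw [hE0] at hx'
      have hfl : flev x = fn 0 x := hflev_of 0 x hx (fun m hm => absurd hm (Nat.not_lt_zero m))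
      exact ⟨hx'.1.2, by rw [← hfl]; exact hne⟩
    | succ m ih =>
      intro k hk
      have hsplit : {x ∈ E (m+1) | flev x ≠ fn k x} ⊆
          {x ∈ E m | flev x ≠ fn k x} ∪ {x ∈ Dn (m+1) | fn (m+1) x ≠ fn k x} := by
        rintro x ⟨hx, hne⟩
        rw [hEs m] at hx
        rcases hx with hx | hx
        · exact Or.inl ⟨hx, hne⟩
        · obtain ⟨hxD, hxE, _, _⟩ := hx
          have hfl : flev x = fn (m+1) x :=
            hflev_of (m+1) x (by rw [hEs m]; exact Or.inr ⟨hxD, hxE, ‹_›, ‹_›⟩)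
              (fun l hl c => hxE (hmono l m (by omega) c))
          exact Or.inr ⟨hxD.2, by rw [← hfl]; exact hne⟩
      exact ((ih k (by omega)).union (hcoh (m+1) k hk)).subset hsplit
  -- `(D ∩ Dn n) \ E n` is finite
  have hDnE : ∀ n, ((D ∩ Dn n) \ E n).Finite := by
    intro n
    cases n with
    | zero =>
      refine ((hD 0).image (fn 0)).subset ?_
      rintro x ⟨⟨hxD, hxDn⟩, hxE⟩
      have : fn 0 x ∉ D := by
        intro hc
        exact hxE (by rw [hE0]; exact ⟨⟨hxD, hxDn⟩, hc, hmaps 0 x hxDn⟩)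
      exact ⟨fn 0 x, ⟨hmaps 0 x hxDn, this⟩, hinvol 0 x hxDn⟩
    | succ k =>
      refine (Set.Finite.union ((hD (k+1)).image (fn (k+1)))
        ((hbad k (k+1) (by omega)).image (fn (k+1)))).subset ?_
      rintro x ⟨⟨hxD, hxDn⟩, hxE⟩
      have hxEk : x ∉ E k := fun c => hxE (by rw [hEs k]; exact Or.inl c)
      have hback : fn (k+1) (fn (k+1) x) = x := hinvol (k+1) x hxDn
      by_cases hyD : fn (k+1) x ∈ D ∩ Dn (k+1)
      · -- then `fn (k+1) x ∈ E k`, and it is a "bad" point of `E k`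
        have hyE : fn (k+1) x ∈ E k := by
          by_contra hyE
          exact hxE (by rw [hEs k]; exact Or.inr ⟨⟨hxD, hxDn⟩, hxEk, hyD, hyE⟩)
        have : flev (fn (k+1) x) ≠ fn (k+1) (fn (k+1) x) := by
          intro hc
          have := (hclos k _ hyE).1
          rw [hc, hback] at this
          exact hxEk this
        exact Or.inr ⟨fn (k+1) x, ⟨hyE, fun c => this (by rw [c, hback])⟩, hback⟩
      · have : fn (k+1) x ∉ D := fun c => hyD ⟨c, hmaps (k+1) x hxDn⟩
        exact Or.inl ⟨fn (k+1) x, ⟨hmaps (k+1) x hxDn, this⟩, hback⟩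
  -- assemble
  set Eu : Set ℕ := ⋃ n, E n with hEu
  obtain ⟨R', hR'sub, hRR', r, hrmaps, hrinvol, hrfpf, hrid⟩ := exists_fpf_invol_sub (D \ Eu)
  obtain ⟨f, hfin, hfout⟩ : ∃ f : ℕ → ℕ, (∀ x, x ∈ Eu → f x = flev x) ∧
      (∀ x, x ∉ Eu → f x = r x) :=
    ⟨fun x => if x ∈ Eu then flev x else r x, fun x hx => if_pos hx, fun x hx => if_neg hx⟩
  refine ⟨Eu ∪ R', f, ?_, ?_, ?_, ?_, ?_⟩
  · -- EqStar (Eu ∪ R') D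
    refine eqStar_of_sub (subStar_of_subset ?_) (hRR'.subset ?_)
    · rintro x (hx | hx)
      · obtain ⟨s, ⟨n, rfl⟩, hxs⟩ := hx
        exact hED n hxs
      · exact (hR'sub hx).1
    · rintro x ⟨hxD, hx⟩
      have hxEu : x ∉ Eu := fun c => hx (Or.inl c)
      exact ⟨⟨hxD, hxEu⟩, fun c => hx (Or.inr c)⟩
  · -- maps to
    rintro x (hx | hx)
    · obtain ⟨s, ⟨n, rfl⟩, hxs⟩ := hx
      rw [hfin x (Set.mem_iUnion.2 ⟨n, hxs⟩)]
      exact Or.inl (Set.mem_iUnion.2 ⟨n, (hclos n x hxs).1⟩)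
    · have hxEu : x ∉ Eu := fun c => (hR'sub hx).2 c
      rw [hfout x hxEu]
      exact Or.inr (hrmaps x hx)
  · -- involution
    rintro x (hx | hx)
    · obtain ⟨s, ⟨n, rfl⟩, hxs⟩ := hx
      obtain ⟨h1, h2, _⟩ := hclos n x hxs
      rw [hfin x (Set.mem_iUnion.2 ⟨n, hxs⟩), hfin _ (Set.mem_iUnion.2 ⟨n, h1⟩)]
      exact h2
    · have hxEu : x ∉ Eu := fun c => (hR'sub hx).2 c
      have hyEu : r x ∉ Eu := fun c => (hR'sub (hrmaps x hx)).2 c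
      rw [hfout x hxEu, hfout _ hyEu]
      exact hrinvol x hx
  · -- fixed point free
    rintro x (hx | hx)
    · obtain ⟨s, ⟨n, rfl⟩, hxs⟩ := hx
      rw [hfin x (Set.mem_iUnion.2 ⟨n, hxs⟩)]
      exact (hclos n x hxs).2.2
    · have hxEu : x ∉ Eu := fun c => (hR'sub hx).2 c
      rw [hfout x hxEu]
      exact hrfpf x hx
  · -- coherence with each `fn n`
    intro n
    refine (((hD n).union (hDnE n)).union (hbad n n (le_refl n))).subset ?_
    rintro x ⟨hxDn, hne⟩
    by_cases hxD : x ∈ D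
    · by_cases hxE : x ∈ E n
      · have hxEu : x ∈ Eu := Set.mem_iUnion.2 ⟨n, hxE⟩
        rw [hfin x hxEu] at hne
        exact Or.inr ⟨hxE, fun c => hne c.symm⟩
      · exact Or.inl (Or.inr ⟨⟨hxD, hxDn⟩, hxE⟩)
    · exact Or.inl (Or.inl ⟨hxDn, hxD⟩)

open Set

theorem omega1_isLimit : Order.IsSuccLimit omega1 :=
  Cardinal.isSuccLimit_ord (Cardinal.aleph0_le_aleph 1)

theorem succ_lt_omega1 {α : Ordinal} (h : α < omega1) : Order.succ α < omega1 :=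
  omega1_isLimit.succ_lt h

theorem countable_Iio_of_lt_omega1 {α : Ordinal} (h : α < omega1) :
    (Set.Iio α).Countable := by
  have hcard : α.card < Cardinal.aleph 1 := Cardinal.lt_ord.1 h
  have hle : α.card ≤ Cardinal.aleph0 := by
    have h1 : Cardinal.aleph 1 = Order.succ (Cardinal.aleph 0) := by
      rw [← Cardinal.aleph_succ]; norm_num
    rw [h1, Order.lt_succ_iff] at hcard
    rwa [Cardinal.aleph_zero] at hcard
  rw [← Set.countable_coe_iff, ← Cardinal.mk_le_aleph0_iff, Ordinal.mk_Iio_ordinal,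
    ← Cardinal.lift_aleph0.{u_1+1, u_1}]
  exact Cardinal.lift_le.2 hle

/-- a monotone cofinal ω-chain below a nonzero countable ordinal -/
theorem exists_chain {α : Ordinal} (h : α < omega1) (h0 : α ≠ 0) :
    ∃ c : ℕ → Ordinal, (∀ n, c n < α) ∧ (∀ m n, m ≤ n → c m ≤ c n) ∧
      ∀ β, β < α → ∃ n, β ≤ c n := by
  have hc : (Set.Iio α).Countable := countable_Iio_of_lt_omega1 h
  have hne : (Set.Iio α).Nonempty := ⟨0, pos_iff_ne_zero.2 h0⟩
  obtain ⟨s, hs⟩ := (Set.countable_iff_exists_surjective hne).1 hc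
  obtain ⟨c, hc0, hcs⟩ : ∃ c : ℕ → Ordinal, c 0 = (s 0 : Ordinal) ∧
      ∀ n, c (n+1) = max (c n) (s (n+1) : Ordinal) :=
    ⟨fun n => Nat.rec (s 0 : Ordinal) (fun m cm => max cm (s (m+1) : Ordinal)) n, rfl, fun _ => rfl⟩
  have hlt : ∀ n, c n < α := by
    intro n
    induction n with
    | zero => rw [hc0]; exact (s 0).2
    | succ k ih => rw [hcs k]; exact max_lt ih (s (k+1)).2
  have hle : ∀ n, (s n : Ordinal) ≤ c n := by
    intro n
    cases n with
    | zero => rw [hc0]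
    | succ k => rw [hcs k]; exact le_max_right _ _
  have hmono : ∀ m n, m ≤ n → c m ≤ c n := by
    intro m n hmn
    induction n with
    | zero => rw [Nat.le_zero] at hmn; subst hmn; exact le_refl _
    | succ k ih =>
      rcases Nat.lt_or_ge m (k+1) with hlt' | hge
      · exact (ih (by omega)).trans (by rw [hcs k]; exact le_max_left _ _)
      · have : m = k+1 := by omega
        subst this; exact le_refl _
  refine ⟨c, hlt, hmono, ?_⟩
  intro β hβ
  obtain ⟨n, hn⟩ := hs ⟨β, hβ⟩
  have hval : (s n : Ordinal) = β := by rw [hn]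
  exact ⟨n, hval ▸ hle n⟩

open Set

/-- the property required of the pair `(D_α, f_α)` at stage `α`, given the previous stages -/
def GoodP (Bse : Ordinal → Set ℕ) (α : Ordinal)
    (prev : ∀ β, β < α → Set ℕ × (ℕ → ℕ)) (p : Set ℕ × (ℕ → ℕ)) : Prop :=
  EqStar p.1 (Bse α)ᶜ ∧ (∀ x ∈ p.1, p.2 x ∈ p.1) ∧ (∀ x ∈ p.1, p.2 (p.2 x) = x) ∧
    (∀ x ∈ p.1, p.2 x ≠ x) ∧
    ∀ β (hb : β < α), {x ∈ (prev β hb).1 | (prev β hb).2 x ≠ p.2 x}.Finite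

open Classical in
/-- the recursively constructed sequence of pairs `(D_α, f_α)` -/
noncomputable def bseq (Bse : Ordinal → Set ℕ) : Ordinal → Set ℕ × (ℕ → ℕ) :=
  Ordinal.lt_wf.fix fun α prev =>
    if h : ∃ p, GoodP Bse α prev p then h.choose else (∅, id)

open Classical in
theorem bseq_eq (Bse : Ordinal → Set ℕ) (α : Ordinal) :
    bseq Bse α = if h : ∃ p, GoodP Bse α (fun β _ => bseq Bse β) p then h.choose
      else (∅, id) := by
  rw [bseq, WellFounded.fix_eq]

theorem compl_diff_compl (A B : Set ℕ) : Aᶜ \ Bᶜ = B \ A := by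
  ext x; simp [Set.mem_diff]; tauto

theorem subStar_congr {A B A' B' : Set ℕ} (hA : EqStar A A') (hB : EqStar B B')
    (h : SubStar A' B') : SubStar A B :=
  ((hA.diff hB).symm.finite_of h : _)

section
variable {Bse : Ordinal → Set ℕ}
variable (hdec : ∀ α β, α < β → β < omega1 →
      SubStar (Bse β) (Bse α) ∧ (Bse α \ Bse β).Infinite)

include hdec in
theorem exists_goodp {α : Ordinal} (hα : α < omega1)
    (IH : ∀ β, β < α → GoodP Bse β (fun γ _ => bseq Bse γ) (bseq Bse β)) :
    ∃ p, GoodP Bse α (fun β _ => bseq Bse β) p := by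
  classical
  by_cases h0 : α = 0
  · obtain ⟨D', f, h1, h2, h3, h4, _⟩ :=
      amalg ((Bse α)ᶜ) (fun _ => (∅ : Set ℕ)) (fun _ => id)
        (fun m n _ => subStar_of_subset (le_refl _))
        (fun m n _ => Set.finite_empty.subset (by rintro x ⟨hx, _⟩; exact hx))
        (fun n => subStar_of_subset (Set.empty_subset _))
        (fun n x hx => absurd hx (Set.notMem_empty x))
        (fun n x hx => absurd hx (Set.notMem_empty x))
        (fun n x hx => absurd hx (Set.notMem_empty x))
    exact ⟨(D', f), h1, h2, h3, h4, fun β hb => absurd (h0 ▸ hb) (by simp)⟩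
  · -- pairwise facts below α
    have hDeq : ∀ β, β < α → EqStar (bseq Bse β).1 (Bse β)ᶜ := fun β hβ => (IH β hβ).1
    have hsubpair : ∀ β γ, β ≤ γ → γ < α → SubStar (bseq Bse β).1 (bseq Bse γ).1 := by
      intro β γ hβγ hγ
      rcases eq_or_lt_of_le hβγ with rfl | hlt
      · exact subStar_of_subset (le_refl _)
      · refine subStar_congr (hDeq β (lt_trans hlt hγ)) (hDeq γ hγ) ?_
        rw [SubStar, compl_diff_compl]
        exact (hdec β γ hlt (lt_trans hγ hα)).1
    have hcohpair : ∀ β γ, β ≤ γ → γ < α →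
        {x ∈ (bseq Bse β).1 | (bseq Bse β).2 x ≠ (bseq Bse γ).2 x}.Finite := by
      intro β γ hβγ hγ
      rcases eq_or_lt_of_le hβγ with rfl | hlt
      · exact Set.finite_empty.subset (by rintro x ⟨_, hx⟩; exact absurd rfl hx)
      · exact (IH γ hγ).2.2.2.2 β hlt
    obtain ⟨c, hclt, hcmono, hccof⟩ := exists_chain hα h0
    obtain ⟨D', f, h1, h2, h3, h4, h5⟩ :=
      amalg ((Bse α)ᶜ) (fun n => (bseq Bse (c n)).1) (fun n => (bseq Bse (c n)).2)
        (fun m n hmn => hsubpair (c m) (c n) (hcmono m n hmn) (hclt n))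
        (fun m n hmn => hcohpair (c m) (c n) (hcmono m n hmn) (hclt n))
        (fun n => by
          refine subStar_congr (hDeq (c n) (hclt n)) (eqStar_refl _) ?_
          rw [SubStar, compl_diff_compl]
          exact (hdec (c n) α (hclt n) hα).1)
        (fun n => (IH (c n) (hclt n)).2.1)
        (fun n => (IH (c n) (hclt n)).2.2.1)
        (fun n => (IH (c n) (hclt n)).2.2.2.1)
    refine ⟨(D', f), h1, h2, h3, h4, ?_⟩
    intro β hb
    obtain ⟨n, hn⟩ := hccof β hb
    refine ((((hcohpair β (c n) hn (hclt n)).union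
      (hsubpair β (c n) hn (hclt n))).union (h5 n)).subset ?_)
    rintro x ⟨hxD, hne⟩
    by_cases hc1 : (bseq Bse β).2 x = (bseq Bse (c n)).2 x
    · by_cases hc2 : x ∈ (bseq Bse (c n)).1
      · exact Or.inr ⟨hc2, fun cc => hne (by rw [hc1, cc])⟩
      · exact Or.inl (Or.inr ⟨hxD, hc2⟩)
    · exact Or.inl (Or.inl ⟨hxD, hc1⟩)

include hdec in
theorem bseq_good : ∀ α, α < omega1 →
    GoodP Bse α (fun β _ => bseq Bse β) (bseq Bse α) := by
  intro α
  induction α using Ordinal.induction with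
  | h α IH =>
    intro hα
    have hex : ∃ p, GoodP Bse α (fun β _ => bseq Bse β) p :=
      exists_goodp hdec hα (fun β hβ => IH β hβ (lt_trans hβ hα))
    rw [bseq_eq Bse α, dif_pos hex]
    exact hex.choose_spec

end

-- more toolkit
theorem eqStar_image_of_almost_eq {g h : ℕ → ℕ} {S T : Set ℕ}
    (hfin : {x ∈ T | g x ≠ h x}.Finite) (hST : S ⊆ T) :
    EqStar (g '' S) (h '' S) := by
  refine ((hfin.image g).union (hfin.image h)).subset ?_
  rintro z (⟨⟨x, hx, rfl⟩, hz⟩ | ⟨⟨x, hx, rfl⟩, hz⟩)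
  · have : g x ≠ h x := fun c => hz ⟨x, hx, c.symm⟩
    exact Or.inl ⟨x, ⟨hST hx, this⟩, rfl⟩
  · have : g x ≠ h x := fun c => hz ⟨x, hx, c⟩
    exact Or.inr ⟨x, ⟨hST hx, this⟩, rfl⟩

theorem eqStar_union_finite {X F : Set ℕ} (hF : F.Finite) : EqStar (X ∪ F) X := by
  refine eqStar_of_sub (hF.subset ?_) (subStar_of_subset Set.subset_union_left)
  rintro x ⟨(hx | hx), hx'⟩
  · exact absurd hx hx'
  · exact hx

section Guess

variable {Bse : Ordinal → Set ℕ} {D : Ordinal → Set ℕ} {f : Ordinal → ℕ → ℕ}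
variable (hbij : ∀ α, α < omega1 → Set.BijOn (f α) (D α) (D α))
variable (hsub : ∀ α β, α < β → β < omega1 → SubStar (D α) (D β))
variable (hcoh : ∀ α β, α ≤ β → β < omega1 → {x ∈ D α | f α x ≠ f β x}.Finite)

include hbij hsub hcoh in
theorem preserve_inter {β γ : Ordinal} (hβγ : β ≤ γ) (hγ : γ < omega1) :
    EqStar (f γ '' (D β ∩ D γ)) (D β ∩ D γ) := by
  rcases eq_or_lt_of_le hβγ with rfl | hlt
  · rw [Set.inter_self, (hbij β hγ).image_eq]
    exact eqStar_refl _
  · have hβ : β < omega1 := lt_trans hlt hγ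
    have hint : EqStar (D β ∩ D γ) (D β) :=
      eqStar_of_sub (subStar_of_subset Set.inter_subset_left)
        ((hsub β γ hlt hγ).subset (by rintro x ⟨h1, h2⟩; exact ⟨h1, fun c => h2 ⟨h1, c⟩⟩))
    have s1 : EqStar (f γ '' (D β ∩ D γ)) (f β '' (D β ∩ D γ)) :=
      eqStar_image_of_almost_eq ((hcoh β γ hβγ hγ).subset (by
        rintro x ⟨h1, h2⟩; exact ⟨h1, fun c => h2 c.symm⟩)) Set.inter_subset_left
    have s2 : EqStar (f β '' (D β ∩ D γ)) (f β '' (D β)) := hint.image (f β)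
    have s3 : f β '' (D β) = D β := (hbij β hβ).image_eq
    have s4 : EqStar (f β '' (D β)) (D β ∩ D γ) := by rw [s3]; exact hint.symm
    exact s1.trans (s2.trans s4)

include hbij hsub hcoh in
theorem preserve_diff {β γ : Ordinal} (hβγ : β ≤ γ) (hγ : γ < omega1) :
    EqStar (f γ '' (D γ \ D β)) (D γ \ D β) := by
  have e1 : D γ \ D β = D γ \ (D β ∩ D γ) := by
    ext x; simp only [Set.mem_diff, Set.mem_inter_iff]; tauto
  rw [e1, image_diff_of_injOn (hbij γ hγ).injOn (le_refl _) Set.inter_subset_right,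
    (hbij γ hγ).image_eq]
  exact (eqStar_refl (D γ)).diff (preserve_inter hbij hsub hcoh hβγ hγ)

variable (hDeq : ∀ α, α < omega1 → EqStar (D α) (Bse α)ᶜ)

include hbij hsub hcoh hDeq in
theorem guess_of_base (u : Ultrafilter ℕ)
    (hbase : ∀ A : Set ℕ, A ∈ u → ∃ α < omega1, SubStar (Bse α) A) :
    ∀ A : Set ℕ, ∃ δ, δ < omega1 ∧ ∀ α, δ ≤ α → α < omega1 →
      EqStar (f α '' ((D α \ D δ) ∩ A)) ((D α \ D δ) ∩ A) ∧
      EqStar (f α '' ((D α \ D δ) \ A)) ((D α \ D δ) \ A) := by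
  have main : ∀ A : Set ℕ, A ∈ u → ∃ δ, δ < omega1 ∧ ∀ α, δ ≤ α → α < omega1 →
      EqStar (f α '' ((D α \ D δ) ∩ A)) ((D α \ D δ) ∩ A) ∧
      ((D α \ D δ) \ A).Finite := by
    intro A hA
    obtain ⟨δ, hδ, hBA⟩ := hbase A hA
    refine ⟨δ, hδ, ?_⟩
    intro α hδα hα
    have hfinA : ((D α \ D δ) \ A).Finite := by
      have hcompl : EqStar ((D δ)ᶜ) (Bse δ) := by
        have := (hDeq δ hδ).compl
        rwa [compl_compl] at this
      have : EqStar ((D δ)ᶜ \ A) (Bse δ \ A) := hcompl.diff (eqStar_refl A)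
      refine (this.symm.finite_of hBA).subset ?_
      rintro x ⟨⟨h1, h2⟩, h3⟩
      exact ⟨h2, h3⟩
    refine ⟨?_, hfinA⟩
    have hXeq : EqStar ((D α \ D δ) ∩ A) (D α \ D δ) := by
      refine eqStar_of_sub (subStar_of_subset Set.inter_subset_left) (hfinA.subset ?_)
      rintro x ⟨h1, h2⟩
      exact ⟨h1, fun c => h2 ⟨h1, c⟩⟩
    exact (hXeq.image (f α)).trans ((preserve_diff hbij hsub hcoh hδα hα).trans hXeq.symm)
  intro A
  rcases u.mem_or_compl_mem A with hA | hA
  · obtain ⟨δ, hδ, hspec⟩ := main A hA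
    refine ⟨δ, hδ, fun α hδα hα => ?_⟩
    obtain ⟨h1, h2⟩ := hspec α hδα hα
    exact ⟨h1, eqStar_of_finite (h2.image _) h2⟩
  · obtain ⟨δ, hδ, hspec⟩ := main Aᶜ hA
    refine ⟨δ, hδ, fun α hδα hα => ?_⟩
    obtain ⟨h1, h2⟩ := hspec α hδα hα
    have e1 : (D α \ D δ) \ A = (D α \ D δ) ∩ Aᶜ := Set.diff_eq _ _
    have e2 : (D α \ D δ) ∩ A = (D α \ D δ) \ Aᶜ := by rw [Set.diff_compl]
    rw [e1, e2]
    exact ⟨eqStar_of_finite (h2.image _) h2, h1⟩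

end Guess

open Set Classical in
/-- Greedy construction: two maps injective on an infinite set `T` and nowhere equal on `T`
admit an infinite subset `A ⊆ T` with `g₁ '' A` and `g₂ '' A` disjoint. -/
theorem exists_infinite_separated {T : Set ℕ} (hT : T.Infinite) {g₁ g₂ : ℕ → ℕ}
    (h1 : Set.InjOn g₁ T) (h2 : Set.InjOn g₂ T) (hne : ∀ x ∈ T, g₁ x ≠ g₂ x) :
    ∃ A, A ⊆ T ∧ A.Infinite ∧ ∀ x ∈ A, ∀ y ∈ A, g₁ x ≠ g₂ y := by
  classical
  set J : Set ℕ → Set ℕ := fun P =>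
    P ∪ ({x ∈ T | g₁ x ∈ g₁ '' P ∪ g₂ '' P} ∪ {x ∈ T | g₂ x ∈ g₁ '' P ∪ g₂ '' P}) with hJ
  have hJfin : ∀ P : Set ℕ, P.Finite → (J P).Finite := by
    intro P hP
    have hF : (g₁ '' P ∪ g₂ '' P).Finite := (hP.image g₁).union (hP.image g₂)
    exact hP.union ((finite_preimage_inj h1 hF).union (finite_preimage_inj h2 hF))
  have hJP : ∀ P : Set ℕ, P ⊆ J P := fun P => Set.subset_union_left
  set pick : Set ℕ → ℕ := fun P => if hP : (T \ J P).Nonempty then hP.choose else 0 with hpickdef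
  have hpick : ∀ P : Set ℕ, P.Finite → pick P ∈ T \ J P := by
    intro P hP
    have hne' : (T \ J P).Nonempty := (hT.diff (hJfin P hP)).nonempty
    have : pick P = hne'.choose := dif_pos hne'
    rw [this]
    exact hne'.choose_spec
  obtain ⟨Q, hQ0, hQs⟩ : ∃ Q : ℕ → Set ℕ, Q 0 = ∅ ∧ ∀ n, Q (n+1) = Q n ∪ {pick (Q n)} :=
    ⟨fun n => Nat.rec ∅ (fun m Qm => Qm ∪ {pick Qm}) n, rfl, fun _ => rfl⟩
  have hQfin : ∀ n, (Q n).Finite := by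
    intro n
    induction n with
    | zero => rw [hQ0]; exact Set.finite_empty
    | succ k ih => rw [hQs k]; exact ih.union (Set.finite_singleton _)
  have hQmono : ∀ m n, m ≤ n → Q m ⊆ Q n := by
    intro m n hmn
    induction n with
    | zero => rw [Nat.le_zero] at hmn; subst hmn; exact le_refl _
    | succ k ih =>
      rcases Nat.lt_or_ge m (k+1) with hlt | hge
      · exact (ih (by omega)).trans (by rw [hQs k]; exact Set.subset_union_left)
      · have : m = k+1 := by omega
        subst this; exact le_refl _
  have hQT : ∀ n, Q n ⊆ T := by
    intro n
    induction n with
    | zero => rw [hQ0]; exact Set.empty_subset _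
    | succ k ih =>
      rw [hQs k]
      rintro x (hx | hx)
      · exact ih hx
      · rw [Set.mem_singleton_iff] at hx; subst hx; exact (hpick (Q k) (hQfin k)).1
  set A : Set ℕ := ⋃ n, Q n with hA
  have hAT : A ⊆ T := by
    rintro x hx
    obtain ⟨s, ⟨n, rfl⟩, hxs⟩ := hx
    exact hQT n hxs
  have hpickA : ∀ n, pick (Q n) ∈ A := fun n =>
    Set.mem_iUnion.2 ⟨n+1, by rw [hQs n]; exact Or.inr rfl⟩
  have hpickQ : ∀ m n, m < n → pick (Q m) ∈ Q n := by
    intro m n hmn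
    exact hQmono (m+1) n (by omega) (by rw [hQs m]; exact Or.inr rfl)
  have hpick_inj : Function.Injective (fun n => pick (Q n)) := by
    intro m n hmn'
    have hmn2 : pick (Q m) = pick (Q n) := hmn'
    by_contra hc
    rcases Nat.lt_or_ge m n with hlt | hge
    · have h1' : pick (Q m) ∈ Q n := hpickQ m n hlt
      have h2' : pick (Q n) ∉ Q n := fun c => (hpick (Q n) (hQfin n)).2 (hJP _ c)
      rw [← hmn2] at h2'
      exact h2' h1'
    · have hlt : n < m := by omega
      have h1' : pick (Q n) ∈ Q m := hpickQ n m hlt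
      have h2' : pick (Q m) ∉ Q m := fun c => (hpick (Q m) (hQfin m)).2 (hJP _ c)
      rw [hmn2] at h2'
      exact h2' h1'
  have hAinf : A.Infinite := Set.infinite_of_injective_forall_mem hpick_inj hpickA
  -- representation of elements of A
  have hrep : ∀ x ∈ A, ∃ n, x = pick (Q n) ∧ Q n ⊆ A := by
    intro x hx
    obtain ⟨s, ⟨k, rfl⟩, hxk⟩ := hx
    have hex : ∃ k, x ∈ Q k := ⟨k, hxk⟩
    have hspec := Nat.find_spec hex
    have h0 : Nat.find hex ≠ 0 := by
      intro hc
      rw [hc, hQ0] at hspec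
      exact hspec
    obtain ⟨m, hm⟩ := Nat.exists_eq_succ_of_ne_zero h0
    rw [hm, hQs m] at hspec
    rcases hspec with hsp | hsp
    · exact absurd hsp (Nat.find_min hex (by omega))
    · rw [Set.mem_singleton_iff] at hsp
      exact ⟨m, hsp, fun z hz => Set.mem_iUnion.2 ⟨m, hz⟩⟩
  refine ⟨A, hAT, hAinf, ?_⟩
  intro x hxA y hyA
  obtain ⟨m, rfl, _⟩ := hrep x hxA
  obtain ⟨n, rfl, _⟩ := hrep y hyA
  rcases Nat.lt_trichotomy m n with hlt | heq | hlt
  · -- y = pick (Q n) avoids g₂ ⁻¹ of g₁ '' (Q n) ∋ g₁ x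
    have hyT : pick (Q n) ∈ T := (hpick (Q n) (hQfin n)).1
    have hyJ : pick (Q n) ∉ J (Q n) := (hpick (Q n) (hQfin n)).2
    intro hc
    refine hyJ (Or.inr (Or.inr ⟨hyT, Or.inl ?_⟩))
    exact ⟨pick (Q m), hpickQ m n hlt, hc⟩
  · subst heq
    exact hne _ (hpick (Q m) (hQfin m)).1
  · have hxT : pick (Q m) ∈ T := (hpick (Q m) (hQfin m)).1
    have hxJ : pick (Q m) ∉ J (Q m) := (hpick (Q m) (hQfin m)).2
    intro hc
    refine hxJ (Or.inr (Or.inl ⟨hxT, Or.inr ?_⟩))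
    exact ⟨pick (Q n), hpickQ n m hlt, hc.symm⟩

/-- the approximation to the automorphism at stage `α` -/
def Gmap (D : Ordinal → Set ℕ) (f : Ordinal → ℕ → ℕ) (α : Ordinal) (A : Set ℕ) : Set ℕ :=
  f α '' (A ∩ D α) ∪ (A \ D α)

section GmapL

variable {D : Ordinal → Set ℕ} {f : Ordinal → ℕ → ℕ}

theorem Gmap_congr {α : Ordinal} {A A' : Set ℕ} (h : EqStar A A') :
    EqStar (Gmap D f α A) (Gmap D f α A') :=
  ((h.inter (eqStar_refl _)).image _).union (h.diff (eqStar_refl _))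

theorem Gmap_inter {α : Ordinal} {A : Set ℕ} (hbijα : Set.BijOn (f α) (D α) (D α)) :
    Gmap D f α A ∩ D α = f α '' (A ∩ D α) := by
  apply subset_antisymm
  · rintro x ⟨(hx | hx), hxD⟩
    · exact hx
    · exact absurd hxD hx.2
  · intro x hx
    refine ⟨Or.inl hx, ?_⟩
    obtain ⟨y, hy, rfl⟩ := hx
    exact hbijα.mapsTo hy.2

theorem Gmap_diffD {α : Ordinal} {A : Set ℕ} (hbijα : Set.BijOn (f α) (D α) (D α)) :
    Gmap D f α A \ D α = A \ D α := by
  apply subset_antisymm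
  · rintro x ⟨(hx | hx), hxD⟩
    · obtain ⟨y, hy, rfl⟩ := hx
      exact absurd (hbijα.mapsTo hy.2) hxD
    · exact hx
  · intro x hx
    exact ⟨Or.inr hx, hx.2⟩

theorem Gmap_union {α : Ordinal} {A A' : Set ℕ} :
    Gmap D f α (A ∪ A') = Gmap D f α A ∪ Gmap D f α A' := by
  unfold Gmap
  rw [Set.union_inter_distrib_right, Set.image_union, Set.union_diff_distrib]
  ext x
  simp only [Set.mem_union]
  tauto

theorem image_image_invol {α : Ordinal} {S : Set ℕ} (hS : S ⊆ D α)
    (hinvolα : ∀ x ∈ D α, f α (f α x) = x) :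
    f α '' (f α '' S) = S := by
  apply subset_antisymm
  · rintro z ⟨y, ⟨x, hx, rfl⟩, rfl⟩
    rw [hinvolα x (hS hx)]
    exact hx
  · intro z hz
    exact ⟨f α z, ⟨z, hz, rfl⟩, hinvolα z (hS hz)⟩

theorem Gmap_compl {α : Ordinal} {A : Set ℕ} (hbijα : Set.BijOn (f α) (D α) (D α))
    (hinvolα : ∀ x ∈ D α, f α (f α x) = x) :
    Gmap D f α Aᶜ = (Gmap D f α A)ᶜ := by
  ext x
  by_cases hx : x ∈ D α
  · constructor
    · rintro (hx1 | hx1)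
      · -- x = f y with y ∈ Aᶜ ∩ D α ; show x ∉ Gmap A
        rintro (hx2 | hx2)
        · obtain ⟨y, hy, hyx⟩ := hx1
          obtain ⟨z, hz, hzx⟩ := hx2
          have : y = z := by
            have := hbijα.injOn (hy.2) (hz.2) (by rw [hyx, hzx])
            exact this
          rw [this] at hy
          exact hy.1 hz.1
        · exact hx2.2 hx
      · exact absurd hx hx1.2
    · intro hx2
      -- x ∈ D α = f '' D α, so x = f y ; y ∈ A would contradict
      have : x ∈ f α '' (D α) := by rw [hbijα.image_eq]; exact hx
      obtain ⟨y, hy, rfl⟩ := this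
      by_cases hyA : y ∈ A
      · exact absurd (Or.inl ⟨y, ⟨hyA, hy⟩, rfl⟩) hx2
      · exact Or.inl ⟨y, ⟨hyA, hy⟩, rfl⟩
  · constructor
    · rintro (hx1 | hx1)
      · obtain ⟨y, hy, rfl⟩ := hx1
        exact absurd (hbijα.mapsTo hy.2) hx
      · rintro (hx2 | hx2)
        · obtain ⟨z, hz, hzx⟩ := hx2
          rw [← hzx] at hx
          exact hx (hbijα.mapsTo hz.2)
        · exact hx1.1 hx2.1
    · intro hx2
      have hxA : x ∉ A := fun c => hx2 (Or.inr ⟨c, hx⟩)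
      exact Or.inr ⟨hxA, hx⟩

theorem Gmap_invol {α : Ordinal} {A : Set ℕ} (hbijα : Set.BijOn (f α) (D α) (D α))
    (hinvolα : ∀ x ∈ D α, f α (f α x) = x) :
    Gmap D f α (Gmap D f α A) = A := by
  have h1 : Gmap D f α A ∩ D α = f α '' (A ∩ D α) := Gmap_inter hbijα
  have h2 : Gmap D f α A \ D α = A \ D α := Gmap_diffD hbijα
  show f α '' (Gmap D f α A ∩ D α) ∪ (Gmap D f α A \ D α) = A
  rw [h1, h2, image_image_invol Set.inter_subset_right hinvolα, Set.inter_union_diff]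

variable (hbij : ∀ α, α < omega1 → Set.BijOn (f α) (D α) (D α))
variable (hsub : ∀ α β, α < β → β < omega1 → SubStar (D α) (D β))
variable (hcoh : ∀ α β, α ≤ β → β < omega1 → {x ∈ D α | f α x ≠ f β x}.Finite)

include hbij hsub hcoh in
theorem Gmap_eq {δ α : Ordinal} {A : Set ℕ} (hδα : δ ≤ α) (hα : α < omega1)
    (hP : EqStar (f α '' ((D α \ D δ) ∩ A)) ((D α \ D δ) ∩ A)) :
    EqStar (Gmap D f δ A) (Gmap D f α A) := by
  rcases eq_or_lt_of_le hδα with rfl | hlt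
  · exact eqStar_refl _
  · have hδ : δ < omega1 := lt_trans hlt hα
    have hfinδα : (D δ \ D α).Finite := hsub δ α hlt hα
    have e1 : A ∩ D α = (A ∩ D δ ∩ D α) ∪ ((D α \ D δ) ∩ A) := by
      ext x
      simp only [Set.mem_inter_iff, Set.mem_union, Set.mem_diff]
      tauto
    have c1 : EqStar (f α '' (A ∩ D δ ∩ D α)) (f δ '' (A ∩ D δ)) := by
      have s1 : EqStar (f α '' (A ∩ D δ ∩ D α)) (f δ '' (A ∩ D δ ∩ D α)) :=
        eqStar_image_of_almost_eq ((hcoh δ α hδα hα).subset (by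
          rintro x ⟨h1, h2⟩; exact ⟨h1, fun c => h2 c.symm⟩))
          (Set.inter_subset_left.trans Set.inter_subset_right)
      have s2 : EqStar (A ∩ D δ ∩ D α) (A ∩ D δ) := by
        refine eqStar_of_sub (subStar_of_subset Set.inter_subset_left) (hfinδα.subset ?_)
        rintro x ⟨⟨h1, h2⟩, h3⟩
        exact ⟨h2, fun c => h3 ⟨⟨h1, h2⟩, c⟩⟩
      exact s1.trans (s2.image _)
    have main : EqStar (Gmap D f α A)
        (f δ '' (A ∩ D δ) ∪ (((D α \ D δ) ∩ A) ∪ (A \ D α))) := by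
      show EqStar (f α '' (A ∩ D α) ∪ (A \ D α)) _
      rw [e1, Set.image_union, Set.union_assoc]
      exact c1.union (hP.union (eqStar_refl _))
    have tail : EqStar (((D α \ D δ) ∩ A) ∪ (A \ D α)) (A \ D δ) := by
      refine eqStar_of_sub (hfinδα.subset ?_) (Set.finite_empty.subset ?_)
      · rintro x ⟨(hx | hx), hx'⟩
        · exact absurd ⟨hx.2, hx.1.2⟩ hx'
        · by_cases hδx : x ∈ D δ
          · exact ⟨hδx, hx.2⟩
          · exact absurd ⟨hx.1, hδx⟩ hx'
      · rintro x ⟨⟨hxA, hxδ⟩, hx'⟩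
        by_cases hαx : x ∈ D α
        · exact absurd (Or.inl ⟨⟨hαx, hxδ⟩, hxA⟩) hx'
        · exact absurd (Or.inr ⟨hxA, hαx⟩) hx'
    exact (main.trans ((eqStar_refl _).union tail)).symm

include hbij hsub hcoh in
theorem Gmap_cap_le {δ α : Ordinal} {A : Set ℕ} (hαδ : α ≤ δ) (hδ : δ < omega1) :
    EqStar (Gmap D f δ A ∩ D α) (f α '' (A ∩ D α)) := by
  have hα : α < omega1 := lt_of_le_of_lt hαδ hδ
  have hfinαδ : (D α \ D δ).Finite := by
    rcases eq_or_lt_of_le hαδ with rfl | hlt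
    · exact Set.finite_empty.subset (by rintro x ⟨h1, h2⟩; exact absurd h1 h2)
    · exact hsub α δ hlt hδ
  have expand : Gmap D f δ A ∩ D α =
      (f δ '' (A ∩ D δ) ∩ D α) ∪ ((A \ D δ) ∩ D α) := by
    show (f δ '' (A ∩ D δ) ∪ (A \ D δ)) ∩ D α = _
    rw [Set.union_inter_distrib_right]
  have t0 : ((A \ D δ) ∩ D α).Finite := hfinαδ.subset (by
    rintro x ⟨⟨hxA, hxδ⟩, hxα⟩; exact ⟨hxα, hxδ⟩)
  have stepA : EqStar (Gmap D f δ A ∩ D α) (f δ '' (A ∩ D δ) ∩ D α) := by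
    rw [expand]; exact eqStar_union_finite t0
  have F1 : EqStar (f δ '' (D δ \ D α)) (D δ \ D α) := preserve_diff hbij hsub hcoh hαδ hδ
  have F2 : EqStar (f δ '' (D α ∩ D δ)) (D α ∩ D δ) := preserve_inter hbij hsub hcoh hαδ hδ
  have u1fin : ((f δ '' (D δ \ D α)) ∩ D α).Finite := by
    refine ((F1.inter (eqStar_refl (D α))).symm).finite_of (Set.finite_empty.subset ?_)
    rintro x ⟨⟨h1, h2⟩, h3⟩
    exact h2 h3
  have u2fin : ((f δ '' (D α ∩ D δ)) \ D α).Finite := by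
    refine ((F2.diff (eqStar_refl (D α))).symm).finite_of (Set.finite_empty.subset ?_)
    rintro x ⟨⟨h1, h2⟩, h3⟩
    exact h3 h1
  have t2 : EqStar (f δ '' (A ∩ D δ) ∩ D α) (f δ '' (A ∩ D δ ∩ D α)) := by
    refine eqStar_of_sub (u1fin.subset ?_) (u2fin.subset ?_)
    · rintro x ⟨⟨hx1, hx2⟩, hx3⟩
      obtain ⟨y, hy, rfl⟩ := hx1
      have hyα : y ∉ D α := fun c => hx3 ⟨y, ⟨⟨hy.1, hy.2⟩, c⟩, rfl⟩
      exact ⟨⟨y, ⟨hy.2, hyα⟩, rfl⟩, hx2⟩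
    · rintro x ⟨hx1, hx2⟩
      obtain ⟨y, hy, rfl⟩ := hx1
      have : f δ y ∉ D α := fun c => hx2 ⟨⟨y, ⟨hy.1.1, hy.1.2⟩, rfl⟩, c⟩
      exact ⟨⟨y, ⟨hy.2, hy.1.2⟩, rfl⟩, this⟩
  have t3 : EqStar (f δ '' (A ∩ D δ ∩ D α)) (f α '' (A ∩ D α)) := by
    have s1 : EqStar (f δ '' (A ∩ D δ ∩ D α)) (f α '' (A ∩ D δ ∩ D α)) :=
      eqStar_image_of_almost_eq ((hcoh α δ hαδ hδ).subset (by
        rintro x ⟨h1, h2⟩; exact ⟨h1, fun c => h2 c.symm⟩)) Set.inter_subset_right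
    have s2 : EqStar (A ∩ D δ ∩ D α) (A ∩ D α) := by
      refine eqStar_of_sub (subStar_of_subset ?_) (hfinαδ.subset ?_)
      · rintro x ⟨⟨h1, h2⟩, h3⟩; exact ⟨h1, h3⟩
      · rintro x ⟨⟨h1, h3⟩, h2⟩
        exact ⟨h3, fun c => h2 ⟨⟨h1, c⟩, h3⟩⟩
    exact s1.trans (s2.image _)
  exact stepA.trans (t2.trans t3)

end GmapL

theorem diff_eq_self_of_disjoint {X Y : Set ℕ} (hd : X ∩ Y = ∅) : X \ Y = X := by
  ext z
  constructor
  · exact fun hz => hz.1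
  · intro hz
    refine ⟨hz, fun c => ?_⟩
    have : z ∈ X ∩ Y := ⟨hz, c⟩
    rw [hd] at this
    exact absurd this (Set.notMem_empty z)

section Main

variable {Bse : Ordinal → Set ℕ}

/-- Existence of the bowtie of involutions. -/
theorem exists_bowtie (u : Ultrafilter ℕ)
    (hdec : ∀ α β, α < β → β < omega1 →
      SubStar (Bse β) (Bse α) ∧ (Bse α \ Bse β).Infinite)
    (hbase : ∀ A : Set ℕ, A ∈ u → ∃ α < omega1, SubStar (Bse α) A) :
    ∃ B : BowtieInv, ∀ α < omega1, EqStar (B.D α) (Bse α)ᶜ := by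
  have good := bseq_good hdec
  have hDeq : ∀ α, α < omega1 → EqStar (bseq Bse α).1 (Bse α)ᶜ := fun α hα => (good α hα).1
  have hmaps : ∀ α, α < omega1 → ∀ x ∈ (bseq Bse α).1, (bseq Bse α).2 x ∈ (bseq Bse α).1 :=
    fun α hα => (good α hα).2.1
  have hinvol : ∀ α, α < omega1 → ∀ x ∈ (bseq Bse α).1, (bseq Bse α).2 ((bseq Bse α).2 x) = x :=
    fun α hα => (good α hα).2.2.1
  have hfpf : ∀ α, α < omega1 → ∀ x ∈ (bseq Bse α).1, (bseq Bse α).2 x ≠ x :=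
    fun α hα => (good α hα).2.2.2.1
  have hbij : ∀ α, α < omega1 → Set.BijOn (bseq Bse α).2 (bseq Bse α).1 (bseq Bse α).1 :=
    fun α hα => bijOn_of_invol (hmaps α hα) (hinvol α hα)
  have hsub : ∀ α β, α < β → β < omega1 → SubStar (bseq Bse α).1 (bseq Bse β).1 := by
    intro α β hαβ hβ
    refine subStar_congr (hDeq α (lt_trans hαβ hβ)) (hDeq β hβ) ?_
    rw [SubStar, compl_diff_compl]
    exact (hdec α β hαβ hβ).1
  have hdiff : ∀ α β, α < β → β < omega1 → ((bseq Bse β).1 \ (bseq Bse α).1).Infinite := by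
    intro α β hαβ hβ
    refine ((hDeq β hβ).diff (hDeq α (lt_trans hαβ hβ))).symm.infinite_of ?_
    rw [compl_diff_compl]
    exact (hdec α β hαβ hβ).2
  have hcoh : ∀ α β, α ≤ β → β < omega1 →
      {x ∈ (bseq Bse α).1 | (bseq Bse α).2 x ≠ (bseq Bse β).2 x}.Finite := by
    intro α β hαβ hβ
    rcases eq_or_lt_of_le hαβ with rfl | hlt
    · exact Set.finite_empty.subset (by rintro x ⟨_, hx⟩; exact absurd rfl hx)
    · exact (good β hβ).2.2.2.2 α hlt
  refine ⟨⟨⟨fun α => (bseq Bse α).1, fun α => (bseq Bse α).2,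
    hbij, hfpf, hsub, hdiff, hcoh, ?_⟩, hinvol⟩, hDeq⟩
  exact guess_of_base hbij hsub hcoh hDeq u hbase

/-- From the bowtie to a nontrivial automorphism. -/
theorem exists_auto (u : Ultrafilter ℕ)
    (hmem : ∀ α < omega1, Bse α ∈ u)
    (hdec : ∀ α β, α < β → β < omega1 →
      SubStar (Bse β) (Bse α) ∧ (Bse α \ Bse β).Infinite)
    (hbase : ∀ A : Set ℕ, A ∈ u → ∃ α < omega1, SubStar (Bse α) A)
    (B : BowtieInv) (hBD : ∀ α < omega1, EqStar (B.D α) (Bse α)ᶜ) :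
    ∃ F : PωFinAuto, ¬ IsTrivial F.Φ := by
  classical
  set D : Ordinal → Set ℕ := B.D with hD
  set f : Ordinal → ℕ → ℕ := B.f with hf
  have hbij : ∀ α, α < omega1 → Set.BijOn (f α) (D α) (D α) := B.bijOn
  have hsub : ∀ α β, α < β → β < omega1 → SubStar (D α) (D β) := B.sub
  have hcoh : ∀ α β, α ≤ β → β < omega1 → {x ∈ D α | f α x ≠ f β x}.Finite := B.coherent
  have hinvol : ∀ α, α < omega1 → ∀ x ∈ D α, f α (f α x) = x := B.invol
  have hfpf : ∀ α, α < omega1 → ∀ x ∈ D α, f α x ≠ x := B.fixedPointFree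
  obtain ⟨δfun, hδ1, hδ2⟩ : ∃ g : Set ℕ → Ordinal, (∀ A, g A < omega1) ∧
      ∀ A α, g A ≤ α → α < omega1 →
        EqStar (f α '' ((D α \ D (g A)) ∩ A)) ((D α \ D (g A)) ∩ A) ∧
        EqStar (f α '' ((D α \ D (g A)) \ A)) ((D α \ D (g A)) \ A) :=
    ⟨fun A => (B.guess A).choose, fun A => (B.guess A).choose_spec.1,
      fun A α h1 h2 => (B.guess A).choose_spec.2 α h1 h2⟩
  obtain ⟨Phi, hPhi⟩ : ∃ P : Set ℕ → Set ℕ, ∀ A, P A = Gmap D f (δfun A) A :=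
    ⟨fun A => Gmap D f (δfun A) A, fun _ => rfl⟩
  -- the key approximation lemmas
  have hL2 : ∀ A α, δfun A ≤ α → α < omega1 → EqStar (Phi A) (Gmap D f α A) := by
    intro A α h1 h2
    rw [hPhi]
    exact Gmap_eq hbij hsub hcoh h1 h2 (hδ2 A α h1 h2).1
  have hL0 : ∀ A α, α < omega1 → EqStar (Phi A ∩ D α) (f α '' (A ∩ D α)) := by
    intro A α hα
    rcases le_or_gt (δfun A) α with hle | hlt
    · have := (hL2 A α hle hα).inter (eqStar_refl (D α))
      rwa [Gmap_inter (hbij α hα)] at this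
    · rw [hPhi]
      exact Gmap_cap_le hbij hsub hcoh (le_of_lt hlt) (hδ1 A)
  -- basic ultrafilter facts
  have hufin : ∀ F : Set ℕ, F.Finite → F ∉ u := by
    intro F hF hFu
    obtain ⟨γ, hγ, hsubF⟩ := hbase F hFu
    have hBγfin : (Bse γ).Finite := (hsubF.union hF).subset (by
      intro x hx
      by_cases hxF : x ∈ F
      · exact Or.inr hxF
      · exact Or.inl ⟨hx, hxF⟩)
    exact (hdec γ (Order.succ γ) (Order.lt_succ γ) (succ_lt_omega1 hγ)).2
      (hBγfin.subset Set.diff_subset)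
  have htail : ∀ S : Set ℕ, (∀ α, α < omega1 → (S ∩ D α).Finite) → S ∉ u := by
    intro S hS hSu
    obtain ⟨γ, hγ, hsubS⟩ := hbase S hSu
    set α := Order.succ γ with hαdef
    have hα : α < omega1 := succ_lt_omega1 hγ
    have hSBα : (S \ Bse α).Finite := by
      have h1 : EqStar (S ∩ D α) (S ∩ (Bse α)ᶜ) := (eqStar_refl S).inter (hBD α hα)
      have h2 : (S ∩ (Bse α)ᶜ).Finite := h1.finite_of (hS α hα)
      exact h2.subset (by rintro x ⟨h1', h2'⟩; exact ⟨h1', h2'⟩)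
    have : (Bse γ \ Bse α).Finite := (hsubS.union hSBα).subset (by
      rintro x ⟨hxγ, hxα⟩
      by_cases hxS : x ∈ S
      · exact Or.inr ⟨hxS, hxα⟩
      · exact Or.inl ⟨hxγ, hxS⟩)
    exact (hdec γ α (Order.lt_succ γ) hα).2 this
  have hpos : ∀ S : Set ℕ, S ∈ u → ∃ α, α < omega1 ∧ (S ∩ D α).Infinite := by
    intro S hSu
    by_contra hc
    push_neg at hc
    refine htail S (fun α hα => ?_) hSu
    have h := hc α hα
    exact h
  refine ⟨⟨Phi, ?_, ?_, ?_, ?_, ?_⟩, ?_⟩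
  · -- congr
    intro A A' h
    set γ := max (δfun A) (δfun A') with hγdef
    have hγ : γ < omega1 := max_lt (hδ1 A) (hδ1 A')
    exact ((hL2 A γ (le_max_left _ _) hγ).trans (Gmap_congr h)).trans
      (hL2 A' γ (le_max_right _ _) hγ).symm
  · -- inj
    intro A A' h
    set γ := max (δfun A) (δfun A') with hγdef
    have hγ : γ < omega1 := max_lt (hδ1 A) (hδ1 A')
    have e : EqStar (Gmap D f γ A) (Gmap D f γ A') :=
      ((hL2 A γ (le_max_left _ _) hγ).symm.trans h).trans (hL2 A' γ (le_max_right _ _) hγ)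
    have e1 : EqStar (A ∩ D γ) (A' ∩ D γ) := by
      have := e.inter (eqStar_refl (D γ))
      rw [Gmap_inter (hbij γ hγ), Gmap_inter (hbij γ hγ)] at this
      exact EqStar.of_image_injOn (hbij γ hγ).injOn Set.inter_subset_right
        Set.inter_subset_right this
    have e2 : EqStar (A \ D γ) (A' \ D γ) := by
      have := e.diff (eqStar_refl (D γ))
      rwa [Gmap_diffD (hbij γ hγ), Gmap_diffD (hbij γ hγ)] at this
    have : EqStar (A ∩ D γ ∪ A \ D γ) (A' ∩ D γ ∪ A' \ D γ) := e1.union e2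
    rwa [Set.inter_union_diff, Set.inter_union_diff] at this
  · -- surj
    intro Bs
    set A := Gmap D f (δfun Bs) Bs with hAdef
    set γ := max (δfun A) (δfun Bs) with hγdef
    have hγ : γ < omega1 := max_lt (hδ1 A) (hδ1 Bs)
    refine ⟨A, ?_⟩
    have inner : EqStar A (Gmap D f γ Bs) := by
      rw [hAdef, ← hPhi]
      exact hL2 Bs γ (le_max_right _ _) hγ
    have : EqStar (Phi A) (Gmap D f γ (Gmap D f γ Bs)) :=
      (hL2 A γ (le_max_left _ _) hγ).trans (Gmap_congr inner)
    rwa [Gmap_invol (hbij γ hγ) (hinvol γ hγ)] at this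
  · -- union
    intro A A'
    set γ := max (max (δfun A) (δfun A')) (δfun (A ∪ A')) with hγdef
    have hγ : γ < omega1 := max_lt (max_lt (hδ1 A) (hδ1 A')) (hδ1 (A ∪ A'))
    have h1 : EqStar (Phi (A ∪ A')) (Gmap D f γ (A ∪ A')) :=
      hL2 (A ∪ A') γ (le_max_right _ _) hγ
    rw [Gmap_union] at h1
    exact h1.trans (((hL2 A γ ((le_max_left _ _).trans (le_max_left _ _)) hγ).symm).union
      ((hL2 A' γ ((le_max_right _ _).trans (le_max_left _ _)) hγ).symm))
  · -- compl
    intro A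
    set γ := max (δfun A) (δfun Aᶜ) with hγdef
    have hγ : γ < omega1 := max_lt (hδ1 A) (hδ1 Aᶜ)
    have h1 : EqStar (Phi Aᶜ) (Gmap D f γ Aᶜ) := hL2 Aᶜ γ (le_max_right _ _) hγ
    rw [Gmap_compl (hbij γ hγ) (hinvol γ hγ)] at h1
    exact h1.trans (hL2 A γ (le_max_left _ _) hγ).symm.compl
  · -- nontriviality
    rintro ⟨h, dom, hdomc, himgc, hinj, htriv⟩
    -- h agrees with f α on almost all of D α
    have hbadfin : ∀ α, α < omega1 → {x ∈ D α ∩ dom | h x ≠ f α x}.Finite := by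
      intro α hα
      by_contra hc
      have hTinf : {x ∈ D α ∩ dom | h x ≠ f α x}.Infinite := hc
      set T := {x ∈ D α ∩ dom | h x ≠ f α x} with hTdef
      have hTdom : T ⊆ dom := fun x hx => hx.1.2
      have hTD : T ⊆ D α := fun x hx => hx.1.1
      obtain ⟨A', hA'T, hA'inf, hA'sep⟩ := exists_infinite_separated hTinf
        (hinj.mono hTdom) ((hbij α hα).injOn.mono hTD) (fun x hx => hx.2)
      have hA'D : A' ⊆ D α := hA'T.trans hTD
      have hA'dom : A' ⊆ dom := hA'T.trans hTdom
      have e1 : EqStar (Phi A' ∩ D α) (f α '' A') := by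
        have := hL0 A' α hα
        rwa [Set.inter_eq_self_of_subset_left hA'D] at this
      have e2 : EqStar (Phi A') (h '' A') := by
        have := htriv A'
        rwa [Set.inter_eq_self_of_subset_left hA'dom] at this
      have e3 : EqStar (h '' A' ∩ D α) (f α '' A') :=
        ((e2.symm.inter (eqStar_refl (D α))).trans e1 : _)
      have hfsub : SubStar (f α '' A') (h '' A') :=
        SubStar.trans e3.symm.sub (subStar_of_subset Set.inter_subset_left)
      have hdisj2 : (f α '' A') ∩ (h '' A') = ∅ := by
        ext z
        simp only [Set.mem_inter_iff, Set.mem_image, Set.mem_empty_iff_false, iff_false]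
        rintro ⟨⟨y, hy, rfl⟩, ⟨x, hx, hxy⟩⟩
        exact hA'sep x hx y hy hxy
      have hffin : (f α '' A').Finite := by
        have : (f α '' A') \ (h '' A') = f α '' A' := diff_eq_self_of_disjoint hdisj2
        rw [← this]
        exact hfsub
      exact hA'inf (finite_of_image_finite ((hbij α hα).injOn.mono hA'D) hffin)
    -- the set of involution points of h is in u
    set V := {x ∈ dom | h x ∈ dom ∧ h (h x) = x ∧ h x ≠ x} with hVdef
    have hVu : V ∈ u := by
      rw [← Ultrafilter.compl_notMem_iff]
      refine htail Vᶜ (fun α hα => ?_)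
      have : Vᶜ ∩ D α ⊆ ((D α \ dom) ∪ {x ∈ D α ∩ dom | h x ≠ f α x}) ∪
          ((f α '' (D α \ dom)) ∪ (f α '' {x ∈ D α ∩ dom | h x ≠ f α x})) := by
        intro x ⟨hxV, hxD⟩
        by_cases hxdom : x ∈ dom
        · by_cases hbad : h x = f α x
          · set y := f α x with hydef
            have hyD : y ∈ D α := (hbij α hα).mapsTo hxD
            have hyx : f α y = x := hinvol α hα x hxD
            by_cases hydom : y ∈ dom
            · by_cases hybad : h y = f α y
              · exfalso
                apply hxV
                refine ⟨hxdom, by rw [hbad]; exact hydom, ?_, ?_⟩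
                · rw [hbad]
                  show h y = x
                  rw [hybad, hyx]
                · rw [hbad]
                  exact hfpf α hα x hxD
              · exact Or.inr (Or.inr ⟨y, ⟨⟨hyD, hydom⟩, hybad⟩, hyx⟩)
            · exact Or.inr (Or.inl ⟨y, ⟨hyD, hydom⟩, hyx⟩)
          · exact Or.inl (Or.inr ⟨⟨hxD, hxdom⟩, hbad⟩)
        · exact Or.inl (Or.inl ⟨hxD, hxdom⟩)
      refine Set.Finite.subset ?_ this
      have hDdom : (D α \ dom).Finite := hdomc.subset (by rintro x ⟨_, hx⟩; exact hx)
      exact ((hDdom.union (hbadfin α hα)).union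
        ((hDdom.image _).union ((hbadfin α hα).image _)))
    -- split V into two pieces on which h moves points in a fixed direction
    have hVsplit : V = {x ∈ V | x < h x} ∪ {x ∈ V | h x < x} := by
      ext x
      constructor
      · intro hx
        rcases Nat.lt_trichotomy x (h x) with h1 | h1 | h1
        · exact Or.inl ⟨hx, h1⟩
        · exact absurd h1.symm hx.2.2.2
        · exact Or.inr ⟨hx, h1⟩
      · rintro (hx | hx) <;> exact hx.1
    have hdisjA : ∃ A : Set ℕ, A ∈ u ∧ A ⊆ V ∧ (h '' A) ∩ A = ∅ := by
      have := hVu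
      rw [hVsplit] at this
      rcases Ultrafilter.union_mem_iff.1 this with hmemA | hmemA
      · refine ⟨{x ∈ V | x < h x}, hmemA, fun x hx => hx.1, ?_⟩
        ext z
        simp only [Set.mem_inter_iff, Set.mem_image, Set.mem_empty_iff_false, iff_false]
        rintro ⟨⟨x, hx, rfl⟩, hz⟩
        -- h x ∈ A : h x < h (h x) = x, but x < h x
        have h1 : h x < h (h x) := hz.2
        rw [hx.1.2.2.1] at h1
        have h2 : x < h x := hx.2
        omega
      · refine ⟨{x ∈ V | h x < x}, hmemA, fun x hx => hx.1, ?_⟩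
        ext z
        simp only [Set.mem_inter_iff, Set.mem_image, Set.mem_empty_iff_false, iff_false]
        rintro ⟨⟨x, hx, rfl⟩, hz⟩
        have h1 : h (h x) < h x := hz.2
        rw [hx.1.2.2.1] at h1
        have h2 : h x < x := hx.2
        omega
    obtain ⟨A, hAu, hAV, hAdisj⟩ := hdisjA
    have hAdom : A ⊆ dom := fun x hx => (hAV hx).1
    set δ := δfun A with hδdef
    have hδ : δ < omega1 := hδ1 A
    have hABu : A ∩ Bse δ ∈ u := by
      have h1 : Bse δ ∈ u := hmem δ hδ
      exact Filter.inter_mem hAu h1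
    obtain ⟨α₀, hα₀, hinf0⟩ := hpos (A ∩ Bse δ) hABu
    set α := max α₀ δ with hαdef
    have hα : α < omega1 := max_lt hα₀ hδ
    have hleα : α₀ ≤ α := by rw [hαdef]; exact le_max_left _ _
    have hsubα : (D α₀ \ D α).Finite := by
      rcases eq_or_lt_of_le hleα with heq | hlt
      · rw [← heq]
        exact Set.finite_empty.subset (by rintro x ⟨h1, h2⟩; exact absurd h1 h2)
      · exact hsub α₀ α hlt hα
    have hinfα : ((A ∩ Bse δ) ∩ D α).Infinite := by
      refine ((hinf0.diff hsubα).mono ?_ : _)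
      rintro x ⟨⟨hx1, hx2⟩, hx3⟩
      refine ⟨hx1, ?_⟩
      by_contra hc
      exact hx3 ⟨hx2, hc⟩
    have hDB : (D δ ∩ Bse δ).Finite := by
      refine ((hBD δ hδ).subset (Set.subset_union_left)).subset ?_
      rintro x ⟨h1, h2⟩
      exact ⟨h1, fun c => c h2⟩
    have hXinf : ((D α \ D δ) ∩ A).Infinite := by
      refine (hinfα.diff hDB).mono ?_
      rintro x ⟨⟨⟨hxA, hxB⟩, hxα⟩, hx2⟩
      have hxδ : x ∉ D δ := fun c => hx2 ⟨c, hxB⟩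
      exact ⟨⟨hxα, hxδ⟩, hxA⟩
    have hleδ : δfun A ≤ α := by rw [hαdef, hδdef]; exact le_max_right _ _
    have hgs : EqStar (f α '' ((D α \ D δ) ∩ A)) ((D α \ D δ) ∩ A) :=
      (hδ2 A α hleδ hα).1
    have hphi : EqStar (Phi A ∩ D α) (f α '' (A ∩ D α)) := hL0 A α hα
    have htr : EqStar (Phi A) (h '' A) := by
      have := htriv A
      rwa [Set.inter_eq_self_of_subset_left hAdom] at this
    have hchain : SubStar ((D α \ D δ) ∩ A) (h '' A) := by
      have s1 : SubStar ((D α \ D δ) ∩ A) (f α '' ((D α \ D δ) ∩ A)) := hgs.symm.sub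
      have s2 : SubStar (f α '' ((D α \ D δ) ∩ A)) (f α '' (A ∩ D α)) :=
        subStar_of_subset (Set.image_mono (by rintro x ⟨hx1, hx2⟩; exact ⟨hx2, hx1.1⟩))
      have s3 : SubStar (f α '' (A ∩ D α)) (Phi A ∩ D α) := hphi.symm.sub
      have s4 : SubStar (Phi A ∩ D α) (h '' A) :=
        SubStar.trans ((htr.inter (eqStar_refl (D α))).sub)
          (subStar_of_subset Set.inter_subset_left)
      exact ((s1.trans s2).trans s3).trans s4
    have : ((D α \ D δ) ∩ A).Finite := by
      have hd : ((D α \ D δ) ∩ A) ∩ (h '' A) = ∅ := by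
        ext z
        simp only [Set.mem_inter_iff, Set.mem_empty_iff_false, iff_false]
        rintro ⟨⟨hz1, hz2⟩, hz3⟩
        have : z ∈ (h '' A) ∩ A := ⟨hz3, hz2⟩
        rw [hAdisj] at this
        exact absurd this (Set.notMem_empty z)
      rw [← diff_eq_self_of_disjoint hd]
      exact hchain
    exact hXinf this

end Main

/-- if `u` is an ultrafilter with a strictly `⊆*`-decreasing
base `⟨B_α : α < ω₁⟩`, then there is a bowtie of involutions whose domains
satisfy `D_α =* ℕ \ B_α`; consequently (the existence of a P-point of
character `ℵ₁` implies) there is a nontrivial automorphism of `P(ω)/Fin`. -/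
theorem pPoint_base_gives_bowtie_of_involutions (u : Ultrafilter ℕ)
    (Bse : Ordinal → Set ℕ)
    (hmem : ∀ α < omega1, Bse α ∈ u)
    (hdec : ∀ α β, α < β → β < omega1 →
      SubStar (Bse β) (Bse α) ∧ (Bse α \ Bse β).Infinite)
    (hbase : ∀ A : Set ℕ, A ∈ u → ∃ α < omega1, SubStar (Bse α) A) :
    (∃ B : BowtieInv, ∀ α < omega1, EqStar (B.D α) (Bse α)ᶜ) ∧
    ∃ F : PωFinAuto, ¬ IsTrivial F.Φ := by
  obtain ⟨B, hBD⟩ := exists_bowtie u hdec hbase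
  exact ⟨⟨B, hBD⟩, exists_auto u hmem hdec hbase B hBD⟩
end

section
/- Let ⟨I_n : n ≥ 3⟩ be the consecutive intervals of ℕ with |I_n| = n, min(I_3) = 0, and min(I_{n+1}) = max(I_n) + 1. Let α be a countable limit ordinal and let ⟨J_ξ : ξ < α⟩ be a sequence of subsets of ℕ such that J_η ⊆* J_ξ whenever ξ ≤ η < α, and such that for each ξ < α: |J_ξ ∩ I_n| ≥ 2 for all n ≥ 3; the set S_ξ = {n ≥ 3 : |J_ξ ∩ I_n| > 2} is infinite; and, letting s_ξ denote the unique increasing bijection from {3,4,5,…} onto S_ξ, |J_ξ ∩ I_{s_ξ(k)}| = k for all k ≥ 3. Suppose S is an infinite subset of {3,4,5,…} with S ⊆* S_ξ for every ξ < α, whose increasing enumeration s : {3,4,5,…} → S satisfies s_ξ(i) ≤ s(i) for all but finitely many i, for every ξ < α. Then there exists J ⊆ ℕ such that J ⊆* J_ξ for every ξ < α, |J ∩ I_n| ≥ 2 for all n ≥ 3, {n ≥ 3 : |J ∩ I_n| > 2} = S, and |J ∩ I_{s(i)}| = i for all i ≥ 3. -/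
open Set

/-- The consecutive intervals `I_n` (for `n ≥ 3`) with `|I_n| = n`,
`min I_3 = 0` and `min I_{n+1} = max I_n + 1`: explicitly,
`I_n = [n(n-1)/2 - 3, n(n+1)/2 - 3)`. -/
def Iseg (n : ℕ) : Set ℕ := Set.Ico (n * (n - 1) / 2 - 3) (n * (n + 1) / 2 - 3)

lemma Iseg_tri {n : ℕ} (hn : 1 ≤ n) : n * (n + 1) / 2 = n * (n - 1) / 2 + n := by
  obtain ⟨k, rfl⟩ : ∃ k, n = k + 1 := ⟨n - 1, by omega⟩
  have h1 : (k + 1) * (k + 1 + 1) = (k + 1) * k + (k + 1) * 2 := by ring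
  have h2 : k + 1 - 1 = k := rfl
  rw [h2, h1, Nat.add_mul_div_right _ _ (by norm_num : (0:ℕ) < 2)]

lemma Iseg_half_ge {n : ℕ} (hn : 3 ≤ n) : n ≤ n * (n - 1) / 2 := by
  rw [Nat.le_div_iff_mul_le (by norm_num)]
  exact Nat.mul_le_mul_left n (by omega)

lemma Iseg_card {n : ℕ} (hn : 3 ≤ n) : (Iseg n).ncard = n := by
  have h2 := Iseg_half_ge hn
  rw [Iseg, ← Finset.coe_Ico, Set.ncard_coe_finset, Nat.card_Ico, Iseg_tri (by omega)]
  omega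

lemma Iseg_lb {n x : ℕ} (hn : 3 ≤ n) (hx : x ∈ Iseg n) : n - 3 ≤ x := by
  have h2 := Iseg_half_ge hn
  simp only [Iseg, Set.mem_Ico] at hx
  omega

lemma Iseg_disjoint {p n x : ℕ} (h : p < n) (hxp : x ∈ Iseg p) (hxn : x ∈ Iseg n) : False := by
  have h1 : p * (p + 1) ≤ n * (n - 1) := by
    calc p * (p + 1) ≤ (n - 1) * n := Nat.mul_le_mul (by omega) (by omega)
    _ = n * (n - 1) := Nat.mul_comm _ _
  have h2 := Nat.div_le_div_right (c := 2) h1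
  simp only [Iseg, Set.mem_Ico] at hxp hxn
  omega

lemma Iseg_finite (n : ℕ) : (Iseg n).Finite := Set.finite_Ico _ _

/-- the limit step of the construction of the sets `J_α`. -/
theorem limit_step_J (a : Ordinal) (halim : Order.IsSuccLimit a) (ha : a < omega1)
    (J : Ordinal → Set ℕ) (s : Ordinal → ℕ → ℕ)
    (hJmono : ∀ ξ η, ξ ≤ η → η < a → SubStar (J η) (J ξ))
    (hJ2 : ∀ ξ < a, ∀ n, 3 ≤ n → 2 ≤ (J ξ ∩ Iseg n).ncard)
    (hSinf : ∀ ξ < a, {n | 3 ≤ n ∧ 2 < (J ξ ∩ Iseg n).ncard}.Infinite)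
    (hsmono : ∀ ξ < a, StrictMonoOn (s ξ) (Set.Ici 3))
    (hsbij : ∀ ξ < a, Set.BijOn (s ξ) (Set.Ici 3)
      {n | 3 ≤ n ∧ 2 < (J ξ ∩ Iseg n).ncard})
    (hJcard : ∀ ξ < a, ∀ k, 3 ≤ k → (J ξ ∩ Iseg (s ξ k)).ncard = k)
    (S : Set ℕ) (hS3 : S ⊆ Set.Ici 3) (hSInf : S.Infinite)
    (hSsub : ∀ ξ < a, SubStar S {n | 3 ≤ n ∧ 2 < (J ξ ∩ Iseg n).ncard})
    (e : ℕ → ℕ) (hemono : StrictMonoOn e (Set.Ici 3))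
    (hebij : Set.BijOn e (Set.Ici 3) S)
    (hse : ∀ ξ < a, {i | 3 ≤ i ∧ ¬ s ξ i ≤ e i}.Finite) :
    ∃ Jlim : Set ℕ,
      (∀ ξ < a, SubStar Jlim (J ξ)) ∧
      (∀ n, 3 ≤ n → 2 ≤ (Jlim ∩ Iseg n).ncard) ∧
      {n | 3 ≤ n ∧ 2 < (Jlim ∩ Iseg n).ncard} = S ∧
      ∀ i, 3 ≤ i → (Jlim ∩ Iseg (e i)).ncard = i := by
  classical
  -- countable cofinal sequence
  have hcnt : (Set.Iio a).Countable := by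
    rw [Cardinal.countable_iff_lt_aleph_one, Ordinal.mk_Iio_ordinal]
    exact Cardinal.lift_lt_aleph_one.mpr (Cardinal.lt_ord.mp ha)
  obtain ⟨h0, hh0⟩ := hcnt.exists_eq_range ⟨0, halim.pos⟩
  have hh0lt : ∀ m, h0 m < a := by
    intro m
    have : h0 m ∈ Set.range h0 := ⟨m, rfl⟩
    rw [← hh0] at this
    exact this
  set μ : ℕ → Ordinal := fun m => (Finset.range (m + 1)).sup h0 with hμdef
  have hμlt : ∀ m, μ m < a := by
    intro m
    rw [hμdef]
    exact (Finset.sup_lt_iff (show (⊥ : Ordinal) < a from halim.pos)).mpr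
      (fun j _ => hh0lt j)
  have hμmono : Monotone μ := by
    intro i j hij
    exact Finset.sup_mono (Finset.range_subset_range.mpr (by omega))
  have hμcof : ∀ ξ < a, ∃ m, ξ ≤ μ m := by
    intro ξ hξ
    have : ξ ∈ Set.range h0 := by rw [← hh0]; exact hξ
    obtain ⟨m, hm⟩ := this
    exact ⟨m, hm ▸ Finset.le_sup (Finset.self_mem_range_succ m)⟩
  set D : ℕ → Set ℕ := fun m => ⋃ j ∈ Set.Iic m, (J (μ m) \ J (μ j)) with hDdef
  have hDfin : ∀ m, (D m).Finite := by
    intro m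
    exact Set.Finite.biUnion (Set.finite_Iic m)
      (fun j hj => hJmono (μ j) (μ m) (hμmono hj) (hμlt m))
  -- i ≤ e i
  have he_ge : ∀ i, 3 ≤ i → i ≤ e i := by
    intro i hi
    induction i, hi using Nat.le_induction with
    | base => exact hS3 (hebij.mapsTo (by norm_num))
    | succ i hi ih =>
      have := hemono (Set.mem_Ici.mpr hi) (Set.mem_Ici.mpr (show 3 ≤ i + 1 by omega))
        (Nat.lt_succ_self i)
      omega
  -- existence of thresholds N m
  have hNex : ∀ m, ∃ N, (∀ n, N ≤ n → ∀ x ∈ Iseg n, x ∉ D m) ∧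
      (∀ i, 3 ≤ i → N ≤ e i → i ≤ (J (μ m) ∩ Iseg (e i)).ncard) := by
    intro m
    obtain ⟨B, hB⟩ := (hDfin m).bddAbove
    set ξ := μ m with hξdef
    have hξ : ξ < a := hμlt m
    have hgood : ∀ i, 3 ≤ i → e i ∈ {n | 3 ≤ n ∧ 2 < (J ξ ∩ Iseg n).ncard} →
        s ξ i ≤ e i → i ≤ (J ξ ∩ Iseg (e i)).ncard := by
      intro i hi3 hmemb hle
      obtain ⟨j, hj3, hj⟩ := (hsbij ξ hξ).surjOn hmemb
      have hij : i ≤ j := by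
        by_contra hc
        push_neg at hc
        have := (hsmono ξ hξ) hj3 (Set.mem_Ici.mpr hi3) hc
        omega
      rw [← hj, hJcard ξ hξ j hj3]
      exact hij
    have hBadfin : {i | 3 ≤ i ∧ ¬ i ≤ (J ξ ∩ Iseg (e i)).ncard}.Finite := by
      have hsub : {i | 3 ≤ i ∧ ¬ i ≤ (J ξ ∩ Iseg (e i)).ncard} ⊆
          {i | 3 ≤ i ∧ e i ∈ S \ {n | 3 ≤ n ∧ 2 < (J ξ ∩ Iseg n).ncard}} ∪
          {i | 3 ≤ i ∧ ¬ s ξ i ≤ e i} := by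
        rintro i ⟨hi3, hbad⟩
        by_cases h1 : s ξ i ≤ e i
        · by_cases h2 : e i ∈ {n | 3 ≤ n ∧ 2 < (J ξ ∩ Iseg n).ncard}
          · exact absurd (hgood i hi3 h2 h1) hbad
          · exact Or.inl ⟨hi3, hebij.mapsTo (Set.mem_Ici.mpr hi3), h2⟩
        · exact Or.inr ⟨hi3, h1⟩
      refine Set.Finite.subset (Set.Finite.union ?_ (hse ξ hξ)) hsub
      refine Set.Finite.of_finite_image ?_ (hebij.injOn.mono (fun i hi => hi.1))
      refine Set.Finite.subset (hSsub ξ hξ) ?_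
      rintro _ ⟨i, ⟨hi3, hm⟩, rfl⟩
      exact hm
    obtain ⟨C, hC⟩ := (hBadfin.image e).bddAbove
    refine ⟨max (B + 4) (C + 1), ?_, ?_⟩
    · intro n hn x hx hxD
      have h1 := hB hxD
      have h2 : n - 3 ≤ x := Iseg_lb (by omega) hx
      omega
    · intro i hi3 hNe
      by_contra hbad
      have : e i ∈ e '' {i | 3 ≤ i ∧ ¬ i ≤ (J ξ ∩ Iseg (e i)).ncard} :=
        ⟨i, ⟨hi3, hbad⟩, rfl⟩
      have := hC this
      omega
  choose N hN1 hN2 using hNex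
  set N' : ℕ → ℕ := fun m => (Finset.range (m + 1)).sup N with hN'def
  have hN'le : ∀ m, N m ≤ N' m := fun m => Finset.le_sup (Finset.self_mem_range_succ m)
  set f : ℕ → ℕ := fun n => Nat.findGreatest (fun m => N' m ≤ n) n with hfdef
  have hf_spec : ∀ n, N' 0 ≤ n → N' (f n) ≤ n :=
    fun n hn => Nat.findGreatest_spec (P := fun m => N' m ≤ n) (Nat.zero_le n) hn
  have hf_ge : ∀ k n, k ≤ n → N' k ≤ n → k ≤ f n :=
    fun k n h1 h2 => Nat.le_findGreatest h1 h2
  set r : ℕ → ℕ := fun n => if n ∈ S then Function.invFunOn e (Set.Ici 3) n else 2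
    with hrdef
  have hr_mem : ∀ n ∈ S, 3 ≤ r n ∧ e (r n) = n := by
    intro n hn
    have hex : ∃ i ∈ Set.Ici 3, e i = n := hebij.surjOn hn
    simp only [hrdef, if_pos hn]
    exact ⟨Function.invFunOn_mem hex, Function.invFunOn_eq hex⟩
  have hr_notmem : ∀ n ∉ S, r n = 2 := by
    intro n hn
    simp only [hrdef, if_neg hn]
  have hr_e : ∀ i, 3 ≤ i → r (e i) = i := by
    intro i hi
    have hiS : e i ∈ S := hebij.mapsTo (Set.mem_Ici.mpr hi)
    obtain ⟨hmem, heq⟩ := hr_mem (e i) hiS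
    exact hebij.injOn (Set.mem_Ici.mpr hmem) (Set.mem_Ici.mpr hi) heq
  set A : ℕ → Set ℕ := fun n =>
    if 3 ≤ n ∧ N' (f n) ≤ n then J (μ (f n)) ∩ Iseg n else Iseg n with hAdef
  have hA_sub : ∀ n, A n ⊆ Iseg n := by
    intro n
    simp only [hAdef]
    split
    · exact Set.inter_subset_right
    · exact subset_rfl
  have hA_card : ∀ n, 3 ≤ n → r n ≤ (A n).ncard := by
    intro n hn
    have hr_le_n : r n ≤ n := by
      by_cases hnS : n ∈ S
      · obtain ⟨hm, he⟩ := hr_mem n hnS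
        calc r n ≤ e (r n) := he_ge _ hm
        _ = n := he
      · rw [hr_notmem n hnS]; omega
    simp only [hAdef]
    by_cases hc : 3 ≤ n ∧ N' (f n) ≤ n
    · rw [if_pos hc]
      by_cases hnS : n ∈ S
      · obtain ⟨hm, he⟩ := hr_mem n hnS
        have := hN2 (f n) (r n) hm (by rw [he]; exact le_trans (hN'le (f n)) hc.2)
        rwa [he] at this
      · rw [hr_notmem n hnS]
        exact hJ2 (μ (f n)) (hμlt (f n)) n hn
    · rw [if_neg hc, Iseg_card hn]
      exact hr_le_n
  have hT : ∀ n, ∃ T, T ⊆ A n ∧ (3 ≤ n → T.ncard = r n) := by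
    intro n
    by_cases hn : 3 ≤ n
    · obtain ⟨T, hT1, hT2⟩ := Set.exists_subset_card_eq (hA_card n hn)
      exact ⟨T, hT1, fun _ => hT2⟩
    · exact ⟨∅, Set.empty_subset _, fun h => absurd h hn⟩
  choose T hTsub hTcard using hT
  have hTIseg : ∀ n, T n ⊆ Iseg n := fun n => (hTsub n).trans (hA_sub n)
  have htrace : ∀ n, 3 ≤ n → (⋃ p ∈ Set.Ici 3, T p) ∩ Iseg n = T n := by
    intro n hn
    apply Set.Subset.antisymm
    · rintro x ⟨hx1, hx2⟩
      simp only [Set.mem_iUnion, Set.mem_Ici, exists_prop] at hx1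
      obtain ⟨p, hp3, hxp⟩ := hx1
      rcases Nat.lt_trichotomy p n with h | rfl | h
      · exact (Iseg_disjoint h (hTIseg p hxp) hx2).elim
      · exact hxp
      · exact (Iseg_disjoint h hx2 (hTIseg p hxp)).elim
    · intro x hx
      exact ⟨Set.mem_biUnion (Set.mem_Ici.mpr hn) hx, hTIseg n hx⟩
  have hcard : ∀ n, 3 ≤ n → ((⋃ p ∈ Set.Ici 3, T p) ∩ Iseg n).ncard = r n := by
    intro n hn
    rw [htrace n hn]
    exact hTcard n hn
  refine ⟨⋃ n ∈ Set.Ici 3, T n, ?_, ?_, ?_, ?_⟩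
  · -- SubStar
    intro ξ hξ
    obtain ⟨k, hk⟩ := hμcof ξ hξ
    have hfin2 : (J (μ k) \ J ξ).Finite := hJmono ξ (μ k) hk (hμlt k)
    set M := N' k + k + N' 0 + 3 with hMdef
    have hsubset : (⋃ n ∈ Set.Ici 3, T n) \ J ξ ⊆
        (⋃ n ∈ Set.Iio M, T n) ∪ (J (μ k) \ J ξ) := by
      rintro x ⟨hx1, hx2⟩
      simp only [Set.mem_iUnion, Set.mem_Ici, exists_prop] at hx1
      obtain ⟨p, hp3, hxp⟩ := hx1
      by_cases hpM : p < M
      · exact Or.inl (Set.mem_biUnion hpM hxp)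
      · push_neg at hpM
        right
        have hcond : 3 ≤ p ∧ N' (f p) ≤ p := ⟨hp3, hf_spec p (by omega)⟩
        have hxA : x ∈ A p := hTsub p hxp
        simp only [hAdef, if_pos hcond] at hxA
        have hkfp : k ≤ f p := hf_ge k p (by omega) (by omega)
        have hxJk : x ∈ J (μ k) := by
          by_contra hxk
          have hxD : x ∈ D (f p) :=
            Set.mem_biUnion (Set.mem_Iic.mpr hkfp) ⟨hxA.1, hxk⟩
          exact hN1 (f p) p (le_trans (hN'le (f p)) hcond.2) x hxA.2 hxD
        exact ⟨hxJk, hx2⟩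
    exact Set.Finite.subset
      (Set.Finite.union
        (Set.Finite.biUnion (Set.finite_Iio M) fun n _ => (Iseg_finite n).subset (hTIseg n))
        hfin2) hsubset
  · -- 2 ≤ ncard
    intro n hn
    rw [hcard n hn]
    by_cases hnS : n ∈ S
    · have := (hr_mem n hnS).1; omega
    · rw [hr_notmem n hnS]
  · -- set of n with > 2 equals S
    ext n
    simp only [Set.mem_setOf_eq]
    constructor
    · rintro ⟨hn3, h2⟩
      rw [hcard n hn3] at h2
      by_contra hnS
      rw [hr_notmem n hnS] at h2
      omega
    · intro hnS
      have hn3 : 3 ≤ n := hS3 hnS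
      refine ⟨hn3, ?_⟩
      rw [hcard n hn3]
      have := (hr_mem n hnS).1
      omega
  · -- exact cardinality at e i
    intro i hi
    have hiS : e i ∈ S := hebij.mapsTo (Set.mem_Ici.mpr hi)
    rw [hcard (e i) (hS3 hiS), hr_e i hi]
end
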